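/- Let (A, Δ, Δ') be a commutative Hopf brace with antipodes S (for Δ) and T (for Δ'). Define ρ(a) = a_{(-1)} ⊗ a_{(0)} = S(a_1) a_{21'} ⊗ a_{22'} and φ(a) = a_{[0]} ⊗ a_{[1]} = (T(a_{1'}))_{(-1)} a_{2'} ⊗ (T(a_{1'}))_{(0)} a_{3'}. Then (A_{Δ'}, A_{Δ'}, ρ, φ) is a Hopf matched pair, i.e. ρ makes A a left (A, Δ')-comodule algebra, φ makes A a right (A, Δ')-comodule algebra, and the conditions (HM1)–(HM4) hold (with Δ' as the comultiplication on both factors). -/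

import Mathlib

open TensorProduct

noncomputable section

namespace HopfPaper

/-- A Hopf algebra structure (comultiplication `Δ`, counit `ε`, antipode `S`) on a
given `k`-algebra `H`, expressed in terms of `k`-linear maps.  Together with the
algebra structure of `H` this is exactly the data of a Hopf algebra
`(H, m, 1, Δ, ε, S)` over the field `k`. -/
structure HopfStruct (k : Type*) [Field k] (H : Type*) [Ring H] [Algebra k H] where
  /-- the comultiplication -/
  Δ : H →ₗ[k] H ⊗[k] H
  /-- the counit -/
  ε : H →ₗ[k] k
  /-- the antipode -/
  S : H →ₗ[k] H
  coassoc : ∀ h : H,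
    TensorProduct.map (LinearMap.id : H →ₗ[k] H) Δ (Δ h)
      = TensorProduct.assoc k H H H
          (TensorProduct.map Δ (LinearMap.id : H →ₗ[k] H) (Δ h))
  counit_left : ∀ h : H,
    TensorProduct.lid k H (TensorProduct.map ε (LinearMap.id : H →ₗ[k] H) (Δ h)) = h
  counit_right : ∀ h : H,
    TensorProduct.rid k H (TensorProduct.map (LinearMap.id : H →ₗ[k] H) ε (Δ h)) = h
  comul_mul : ∀ a b : H, Δ (a * b) = Δ a * Δ b
  comul_one : Δ 1 = 1
  counit_mul : ∀ a b : H, ε (a * b) = ε a * ε b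
  counit_one : ε 1 = 1
  antipode_left : ∀ h : H,
    LinearMap.mul' k H (TensorProduct.map S (LinearMap.id : H →ₗ[k] H) (Δ h))
      = algebraMap k H (ε h)
  antipode_right : ∀ h : H,
    LinearMap.mul' k H (TensorProduct.map (LinearMap.id : H →ₗ[k] H) S (Δ h))
      = algebraMap k H (ε h)

variable (k : Type*) [Field k]

/-- `m ↦ m ⊗ 1`. -/
def ι₁ (M N : Type*) [Ring M] [Algebra k M] [Ring N] [Algebra k N] :
    M →ₗ[k] M ⊗[k] N :=
  (TensorProduct.mk k M N).flip 1

/-- `n ↦ 1 ⊗ n`. -/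
def ι₂ (M N : Type*) [Ring M] [Algebra k M] [Ring N] [Algebra k N] :
    N →ₗ[k] M ⊗[k] N :=
  TensorProduct.mk k M N 1

/-- multiplication of three factors, `x ⊗ (y ⊗ z) ↦ x * y * z`. -/
def mul₃ (T : Type*) [Ring T] [Algebra k T] : T ⊗[k] (T ⊗[k] T) →ₗ[k] T :=
  (LinearMap.mul' k T).comp
    (TensorProduct.map (LinearMap.id : T →ₗ[k] T) (LinearMap.mul' k T))

/-- multiplication of four factors. -/
def mul₄ (T : Type*) [Ring T] [Algebra k T] :
    T ⊗[k] (T ⊗[k] (T ⊗[k] T)) →ₗ[k] T :=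
  (LinearMap.mul' k T).comp
    (TensorProduct.map (LinearMap.id : T →ₗ[k] T) (mul₃ k T))

/-- The left hand side `h_{1'} ⊗ h_{2'1} ⊗ h_{2'2}` of the Hopf brace compatibility
condition (2.1), i.e. `(id ⊗ Δ) ∘ Δ'`. -/
def braceLHS (H : Type*) [Ring H] [Algebra k H] (Δ Δ' : H →ₗ[k] H ⊗[k] H) :
    H →ₗ[k] H ⊗[k] (H ⊗[k] H) :=
  (TensorProduct.map (LinearMap.id : H →ₗ[k] H) Δ).comp Δ'

/-- The right hand side `h_{11'}S(h_2)h_{31'} ⊗ h_{12'} ⊗ h_{32'}` of the Hopf brace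
compatibility condition (2.1):  it is obtained from the twofold comultiplication
`h ↦ h_1 ⊗ (h_2 ⊗ h_3)` (using `Δ`) by applying `Δ'` to the first and third legs,
`S` to the middle leg, placing the results in the appropriate tensor positions of
`H ⊗ (H ⊗ H)` (filled with `1`s) and multiplying. -/
def braceRHS (H : Type*) [Ring H] [Algebra k H] (Δ Δ' : H →ₗ[k] H ⊗[k] H)
    (S : H →ₗ[k] H) : H →ₗ[k] H ⊗[k] (H ⊗[k] H) :=
  (mul₃ k (H ⊗[k] (H ⊗[k] H))).comp
    ((TensorProduct.map
        ((TensorProduct.map (LinearMap.id : H →ₗ[k] H) (ι₁ k H H)).comp Δ')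
        (TensorProduct.map ((ι₁ k H (H ⊗[k] H)).comp S)
          ((TensorProduct.map (LinearMap.id : H →ₗ[k] H) (ι₂ k H H)).comp Δ'))).comp
      ((TensorProduct.map (LinearMap.id : H →ₗ[k] H) Δ).comp Δ))

/-- A Hopf brace on the `k`-algebra `H` : two Hopf algebra structures sharing the
multiplication and unit of `H`, subject to the compatibility condition (2.1):
`h_{1'} ⊗ h_{2'1} ⊗ h_{2'2} = h_{11'}S(h_2)h_{31'} ⊗ h_{12'} ⊗ h_{32'}`. -/
structure HopfBrace (H : Type*) [Ring H] [Algebra k H] where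
  fst : HopfStruct k H
  snd : HopfStruct k H
  compat : ∀ h : H,
    braceLHS k H fst.Δ snd.Δ h = braceRHS k H fst.Δ snd.Δ fst.S h

/-- The coaction `ρ(h) = S(h_1) h_{21'} ⊗ h_{22'}` of Lemma 2.5. -/
def ρmap (H : Type*) [Ring H] [Algebra k H] (Δ Δ' : H →ₗ[k] H ⊗[k] H)
    (S : H →ₗ[k] H) : H →ₗ[k] H ⊗[k] H :=
  (LinearMap.mul' k (H ⊗[k] H)).comp
    ((TensorProduct.map ((ι₁ k H H).comp S) Δ').comp Δ)

/-- The coaction `φ(a) = (T(a_{1'}))_{(-1)} a_{2'} ⊗ (T(a_{1'}))_{(0)} a_{3'}`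
of Lemma 2.8(2), where `x_{(-1)} ⊗ x_{(0)} = ρ(x)`. -/
def φmap (H : Type*) [Ring H] [Algebra k H] (Δ Δ' : H →ₗ[k] H ⊗[k] H)
    (S T : H →ₗ[k] H) : H →ₗ[k] H ⊗[k] H :=
  (LinearMap.mul' k (H ⊗[k] H)).comp
    ((TensorProduct.map ((ρmap k H Δ Δ' S).comp T)
        (LinearMap.id : H ⊗[k] H →ₗ[k] H ⊗[k] H)).comp
      ((TensorProduct.map (LinearMap.id : H →ₗ[k] H) Δ').comp Δ'))

/-- `ρ : A →ₗ H ⊗ A` is a coassociative counital left coaction of the coalgebra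
`(H, ΔH, εH)`. -/
def LeftCoaction (A H : Type*) [Ring A] [Algebra k A] [Ring H] [Algebra k H]
    (ΔH : H →ₗ[k] H ⊗[k] H) (εH : H →ₗ[k] k) (ρ : A →ₗ[k] H ⊗[k] A) : Prop :=
  (∀ a : A,
    TensorProduct.map (LinearMap.id : H →ₗ[k] H) ρ (ρ a)
      = TensorProduct.assoc k H H A
          (TensorProduct.map ΔH (LinearMap.id : A →ₗ[k] A) (ρ a))) ∧
  (∀ a : A,
    TensorProduct.lid k A (TensorProduct.map εH (LinearMap.id : A →ₗ[k] A) (ρ a)) = a)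

/-- `φ : H →ₗ H ⊗ A` is a coassociative counital right coaction of the coalgebra
`(A, ΔA, εA)`. -/
def RightCoaction (A H : Type*) [Ring A] [Algebra k A] [Ring H] [Algebra k H]
    (ΔA : A →ₗ[k] A ⊗[k] A) (εA : A →ₗ[k] k) (φ : H →ₗ[k] H ⊗[k] A) : Prop :=
  (∀ h : H,
    TensorProduct.map (LinearMap.id : H →ₗ[k] H) ΔA (φ h)
      = TensorProduct.assoc k H A A
          (TensorProduct.map φ (LinearMap.id : A →ₗ[k] A) (φ h))) ∧
  (∀ h : H,
    TensorProduct.rid k H (TensorProduct.map (LinearMap.id : H →ₗ[k] H) εA (φ h)) = h)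

/-- a linear map which is moreover multiplicative and unital. -/
def IsAlgebraMorphism (M N : Type*) [Ring M] [Algebra k M] [Ring N] [Algebra k N]
    (f : M →ₗ[k] N) : Prop :=
  (∀ a b : M, f (a * b) = f a * f b) ∧ f 1 = 1

/-- `a ↦ a_{1(-1)} a_{2(-1)} ⊗ a_{1(0)} ⊗ a_{2(0)}`, the right hand side of the
comodule coalgebra condition. -/
def comodCoalgRHS (A H : Type*) [Ring A] [Algebra k A] [Ring H] [Algebra k H]
    (ΔA : A →ₗ[k] A ⊗[k] A) (ρ : A →ₗ[k] H ⊗[k] A) :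
    A →ₗ[k] H ⊗[k] (A ⊗[k] A) :=
  (LinearMap.mul' k (H ⊗[k] (A ⊗[k] A))).comp
    ((TensorProduct.map
        ((TensorProduct.map (LinearMap.id : H →ₗ[k] H) (ι₁ k A A)).comp ρ)
        ((TensorProduct.map (LinearMap.id : H →ₗ[k] H) (ι₂ k A A)).comp ρ)).comp ΔA)

/-- The two conditions making a left `H`-comodule `(A, ρ)` a comodule coalgebra:
`a_{(-1)} ⊗ Δ(a_{(0)}) = a_{1(-1)} a_{2(-1)} ⊗ a_{1(0)} ⊗ a_{2(0)}` and
`a_{(-1)} ε(a_{(0)}) = ε(a) 1`. -/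
def IsComodCoalg (A H : Type*) [Ring A] [Algebra k A] [Ring H] [Algebra k H]
    (ΔA : A →ₗ[k] A ⊗[k] A) (εA : A →ₗ[k] k) (ρ : A →ₗ[k] H ⊗[k] A) : Prop :=
  (∀ a : A,
    TensorProduct.map (LinearMap.id : H →ₗ[k] H) ΔA (ρ a)
      = comodCoalgRHS k A H ΔA ρ a) ∧
  (∀ a : A,
    TensorProduct.rid k H (TensorProduct.map (LinearMap.id : H →ₗ[k] H) εA (ρ a))
      = algebraMap k H (εA a))

/-- `a ↦ a_{1(-1)} a_{2(-1)[0]} ⊗ a_{1(0)} a_{2(-1)[1]} ⊗ a_{2(0)}`, the right hand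
side of (HM2). -/
def HM2RHS (A H : Type*) [Ring A] [Algebra k A] [Ring H] [Algebra k H]
    (ΔA : A →ₗ[k] A ⊗[k] A) (ρ : A →ₗ[k] H ⊗[k] A) (φ : H →ₗ[k] H ⊗[k] A) :
    A →ₗ[k] H ⊗[k] (A ⊗[k] A) :=
  (LinearMap.mul' k (H ⊗[k] (A ⊗[k] A))).comp
    ((TensorProduct.map
        ((TensorProduct.map (LinearMap.id : H →ₗ[k] H) (ι₁ k A A)).comp ρ)
        ((TensorProduct.assoc k H A A).toLinearMap.comp
          ((TensorProduct.map φ (LinearMap.id : A →ₗ[k] A)).comp ρ))).comp ΔA)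

/-- `h ↦ h_{1[0]} ⊗ h_{1[1](-1)} h_{2[0]} ⊗ h_{1[1](0)} h_{2[1]}`, the right hand
side of (HM3). -/
def HM3RHS (A H : Type*) [Ring A] [Algebra k A] [Ring H] [Algebra k H]
    (ΔH : H →ₗ[k] H ⊗[k] H) (ρ : A →ₗ[k] H ⊗[k] A) (φ : H →ₗ[k] H ⊗[k] A) :
    H →ₗ[k] H ⊗[k] (H ⊗[k] A) :=
  (LinearMap.mul' k (H ⊗[k] (H ⊗[k] A))).comp
    ((TensorProduct.map
        ((TensorProduct.map (LinearMap.id : H →ₗ[k] H) ρ).comp φ)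
        ((ι₂ k H (H ⊗[k] A)).comp φ)).comp ΔH)

/-- A Hopf matched pair `(A, H)` (Definition 3.1): `ρ` makes `A` a left
`H`-comodule algebra, `φ` makes `H` a right `A`-comodule algebra, and the
compatibility conditions (HM1)–(HM4) hold. -/
def IsHopfMatchedPair (A H : Type*) [Ring A] [Algebra k A] [Ring H] [Algebra k H]
    (ΔA : A →ₗ[k] A ⊗[k] A) (εA : A →ₗ[k] k)
    (ΔH : H →ₗ[k] H ⊗[k] H) (εH : H →ₗ[k] k)
    (ρ : A →ₗ[k] H ⊗[k] A) (φ : H →ₗ[k] H ⊗[k] A) : Prop :=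
  LeftCoaction k A H ΔH εH ρ ∧
  IsAlgebraMorphism k A (H ⊗[k] A) ρ ∧
  RightCoaction k A H ΔA εA φ ∧
  IsAlgebraMorphism k H (H ⊗[k] A) φ ∧
  -- (HM1)
  (∀ a : A,
    TensorProduct.rid k H (TensorProduct.map (LinearMap.id : H →ₗ[k] H) εA (ρ a))
      = algebraMap k H (εA a)) ∧
  (∀ h : H,
    TensorProduct.lid k A (TensorProduct.map εH (LinearMap.id : A →ₗ[k] A) (φ h))
      = algebraMap k A (εH h)) ∧
  -- (HM2)
  (∀ a : A,
    TensorProduct.map (LinearMap.id : H →ₗ[k] H) ΔA (ρ a) = HM2RHS k A H ΔA ρ φ a) ∧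
  -- (HM3)
  (∀ h : H,
    TensorProduct.assoc k H H A
        (TensorProduct.map ΔH (LinearMap.id : A →ₗ[k] A) (φ h))
      = HM3RHS k A H ΔH ρ φ h) ∧
  -- (HM4)
  (∀ (a : A) (h : H), φ h * ρ a = ρ a * φ h)

/-- Equation (3.2): `Δ(a) = a_{1'} T(a_{2'(-1)}) ⊗ a_{2'(0)}`. -/
def Δfromρ (A : Type*) [Ring A] [Algebra k A] (Δ' : A →ₗ[k] A ⊗[k] A)
    (T : A →ₗ[k] A) (ρ : A →ₗ[k] A ⊗[k] A) : A →ₗ[k] A ⊗[k] A :=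
  (LinearMap.mul' k (A ⊗[k] A)).comp
    ((TensorProduct.map (ι₁ k A A)
        ((TensorProduct.map T (LinearMap.id : A →ₗ[k] A)).comp ρ)).comp Δ')

/-- Equation (3.3): `S(a) = a_{(-1)} T(a_{(0)})`. -/
def Sfromρ (A : Type*) [Ring A] [Algebra k A] (T : A →ₗ[k] A)
    (ρ : A →ₗ[k] A ⊗[k] A) : A →ₗ[k] A :=
  (LinearMap.mul' k A).comp
    ((TensorProduct.map (LinearMap.id : A →ₗ[k] A) T).comp ρ)

/-- The comultiplication `Δ_R(h) = R · Δ(h) · R⁻¹` obtained by conjugating `Δ` with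
an invertible element `R ∈ H ⊗ H`. -/
def conjComul (H : Type*) [Ring H] [Algebra k H] (R Rinv : H ⊗[k] H)
    (Δ : H →ₗ[k] H ⊗[k] H) : H →ₗ[k] H ⊗[k] H :=
  (LinearMap.mulLeft k R).comp ((LinearMap.mulRight k Rinv).comp Δ)

/-- The braiding candidate `c(x ⊗ y) = x_{(-1)} y_{[0]} ⊗ x_{(0)} y_{[1]}` of
Proposition 2.9, i.e. `c = mult ∘ (ρ ⊗ φ)`. -/
def cmap (A : Type*) [Ring A] [Algebra k A] (Δ Δ' : A →ₗ[k] A ⊗[k] A)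
    (S T : A →ₗ[k] A) : A ⊗[k] A →ₗ[k] A ⊗[k] A :=
  (LinearMap.mul' k (A ⊗[k] A)).comp
    (TensorProduct.map (ρmap k A Δ Δ' S) (φmap k A Δ Δ' S T))

/-- `γ(x ⊗ y) = x y_{(-1)} ⊗ y_{(0)}` for a coaction `ρ(y) = y_{(-1)} ⊗ y_{(0)}`. -/
def γmap (A : Type*) [Ring A] [Algebra k A] (ρ : A →ₗ[k] A ⊗[k] A) :
    A ⊗[k] A →ₗ[k] A ⊗[k] A :=
  (LinearMap.mul' k (A ⊗[k] A)).comp (TensorProduct.map (ι₁ k A A) ρ)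

/-- `σ(x ⊗ y) = y_2 ⊗ x S(y_1) y_3`. -/
def σmap (A : Type*) [Ring A] [Algebra k A] (Δ : A →ₗ[k] A ⊗[k] A)
    (S : A →ₗ[k] A) : A ⊗[k] A →ₗ[k] A ⊗[k] A :=
  (mul₄ k (A ⊗[k] A)).comp
    ((TensorProduct.map (ι₂ k A A)
        (TensorProduct.map ((ι₂ k A A).comp S)
          (TensorProduct.map (ι₁ k A A) (ι₂ k A A)))).comp
      (TensorProduct.map (LinearMap.id : A →ₗ[k] A)
        ((TensorProduct.map (LinearMap.id : A →ₗ[k] A) Δ).comp Δ)))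

/-- The usual tensor product comultiplication `Δ̂` on `A ⊗ H`:
`a ⊗ h ↦ (a_1 ⊗ h_1) ⊗ (a_2 ⊗ h_2)`. -/
def hatΔ (A H : Type*) [Ring A] [Algebra k A] [Ring H] [Algebra k H]
    (ΔA : A →ₗ[k] A ⊗[k] A) (ΔH : H →ₗ[k] H ⊗[k] H) :
    A ⊗[k] H →ₗ[k] (A ⊗[k] H) ⊗[k] (A ⊗[k] H) :=
  (TensorProduct.tensorTensorTensorComm k A A H H).toLinearMap.comp
    (TensorProduct.map ΔA ΔH)

/-- The bicrossed coproduct comultiplication on `A ⊗ H`: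
`Δ̃(a ⊗ h) = a_1 ⊗ a_{2(-1)} h_{1[0]} ⊗ a_{2(0)} h_{1[1]} ⊗ h_2`. -/
def bicrossΔ (A H : Type*) [Ring A] [Algebra k A] [Ring H] [Algebra k H]
    (ΔA : A →ₗ[k] A ⊗[k] A) (ΔH : H →ₗ[k] H ⊗[k] H)
    (ρ : A →ₗ[k] H ⊗[k] A) (φ : H →ₗ[k] H ⊗[k] A) :
    A ⊗[k] H →ₗ[k] (A ⊗[k] H) ⊗[k] (A ⊗[k] H) :=
  (LinearMap.mul' k ((A ⊗[k] H) ⊗[k] (A ⊗[k] H))).comp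
    (TensorProduct.map
      -- a ↦ (a_1 ⊗ a_{2(-1)}) ⊗ (a_{2(0)} ⊗ 1)
      ((TensorProduct.map (LinearMap.id : A ⊗[k] H →ₗ[k] A ⊗[k] H) (ι₁ k A H)).comp
        ((TensorProduct.assoc k A H A).symm.toLinearMap.comp
          ((TensorProduct.map (LinearMap.id : A →ₗ[k] A) ρ).comp ΔA)))
      -- h ↦ (1 ⊗ h_{1[0]}) ⊗ (h_{1[1]} ⊗ h_2)
      ((TensorProduct.map (ι₂ k A H) (LinearMap.id : A ⊗[k] H →ₗ[k] A ⊗[k] H)).comp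
        ((TensorProduct.assoc k H A H).toLinearMap.comp
          ((TensorProduct.map φ (LinearMap.id : H →ₗ[k] H)).comp ΔH))))

/-- The antipode of the bicrossed coproduct:
`S̃(a ⊗ h) = S_A(h_{[1]}) S_A(a_{(0)}) ⊗ S_H(h_{[0]}) S_H(a_{(-1)})`. -/
def bicrossS (A H : Type*) [Ring A] [Algebra k A] [Ring H] [Algebra k H]
    (SA : A →ₗ[k] A) (SH : H →ₗ[k] H)
    (ρ : A →ₗ[k] H ⊗[k] A) (φ : H →ₗ[k] H ⊗[k] A) :
    A ⊗[k] H →ₗ[k] A ⊗[k] H :=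
  (LinearMap.mul' k (A ⊗[k] H)).comp
    ((TensorProduct.map
        ((TensorProduct.map SA SH).comp ((TensorProduct.comm k H A).toLinearMap.comp φ))
        ((TensorProduct.map SA SH).comp ((TensorProduct.comm k H A).toLinearMap.comp ρ))).comp
      (TensorProduct.comm k A H).toLinearMap)

/-- The left hand side `h_{[0]} ⊗ h_{[1]1} ⊗ h_{[1]2}` of equation (4.1), where the
`A`-leg is comultiplied with `Δ'`. -/
def eq41LHS (A H : Type*) [Ring A] [Algebra k A] [Ring H] [Algebra k H]
    (Δ'A : A →ₗ[k] A ⊗[k] A) (φ : H →ₗ[k] H ⊗[k] A) :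
    H →ₗ[k] H ⊗[k] (A ⊗[k] A) :=
  (TensorProduct.map (LinearMap.id : H →ₗ[k] H) Δ'A).comp φ

/-- The right hand side `h_{1[0]} S(h_2) h_{3[0]} ⊗ h_{1[1]} ⊗ h_{3[1]}` of
equation (4.1). -/
def eq41RHS (A H : Type*) [Ring A] [Algebra k A] [Ring H] [Algebra k H]
    (ΔH : H →ₗ[k] H ⊗[k] H) (SH : H →ₗ[k] H) (φ : H →ₗ[k] H ⊗[k] A) :
    H →ₗ[k] H ⊗[k] (A ⊗[k] A) :=
  (mul₃ k (H ⊗[k] (A ⊗[k] A))).comp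
    ((TensorProduct.map
        ((TensorProduct.map (LinearMap.id : H →ₗ[k] H) (ι₁ k A A)).comp φ)
        (TensorProduct.map ((ι₁ k H (A ⊗[k] A)).comp SH)
          ((TensorProduct.map (LinearMap.id : H →ₗ[k] H) (ι₂ k A A)).comp φ))).comp
      ((TensorProduct.map (LinearMap.id : H →ₗ[k] H) ΔH).comp ΔH))

/-- `x ↦ x_{11'} S(x_2) ⊗ x_{12'} ⊗ 1 ∈ H ⊗ (H ⊗ A)`, an auxiliary map for
equations (4.2) and (4.3). -/
def LHmap (A H : Type*) [Ring A] [Algebra k A] [Ring H] [Algebra k H]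
    (ΔH Δ'H : H →ₗ[k] H ⊗[k] H) (SH : H →ₗ[k] H) :
    H →ₗ[k] H ⊗[k] (H ⊗[k] A) :=
  (LinearMap.mul' k (H ⊗[k] (H ⊗[k] A))).comp
    ((TensorProduct.map
        ((TensorProduct.map (LinearMap.id : H →ₗ[k] H) (ι₁ k H A)).comp Δ'H)
        ((ι₁ k H (H ⊗[k] A)).comp SH)).comp ΔH)

/-- The right hand side
`a_{(-1)11'} S(a_{(-1)2}) a_{(0)(-1)'} ⊗ a_{(-1)12'} ⊗ a_{(0)(0)'}` of
equation (4.2). -/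
def eq42RHS (A H : Type*) [Ring A] [Algebra k A] [Ring H] [Algebra k H]
    (ΔH Δ'H : H →ₗ[k] H ⊗[k] H) (SH : H →ₗ[k] H)
    (ρ ρ' : A →ₗ[k] H ⊗[k] A) :
    A →ₗ[k] H ⊗[k] (H ⊗[k] A) :=
  (LinearMap.mul' k (H ⊗[k] (H ⊗[k] A))).comp
    ((TensorProduct.map (LHmap k A H ΔH Δ'H SH)
        ((TensorProduct.map (LinearMap.id : H →ₗ[k] H) (ι₂ k H A)).comp ρ')).comp ρ)

/-- The right hand side
`h_{1[0]11'} S(h_{1[0]2}) h_{1[1](-1)'} h_2 ⊗ h_{1[0]12'} ⊗ h_{1[1](0)'}` of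
equation (4.3). -/
def eq43RHS (A H : Type*) [Ring A] [Algebra k A] [Ring H] [Algebra k H]
    (ΔH Δ'H : H →ₗ[k] H ⊗[k] H) (SH : H →ₗ[k] H)
    (ρ' : A →ₗ[k] H ⊗[k] A) (φ : H →ₗ[k] H ⊗[k] A) :
    H →ₗ[k] H ⊗[k] (H ⊗[k] A) :=
  (LinearMap.mul' k (H ⊗[k] (H ⊗[k] A))).comp
    ((TensorProduct.map
        ((LinearMap.mul' k (H ⊗[k] (H ⊗[k] A))).comp
          ((TensorProduct.map (LHmap k A H ΔH Δ'H SH)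
              ((TensorProduct.map (LinearMap.id : H →ₗ[k] H) (ι₂ k H A)).comp ρ')).comp φ))
        (ι₁ k H (H ⊗[k] A))).comp ΔH)

/-! ### Auxiliary machinery for the proof of Proposition 3.3 -/

section AuxTools

variable {k : Type*} [Field k]

lemma hb_i1_apply {M N : Type*} [Ring M] [Algebra k M] [Ring N] [Algebra k N] (a : M) :
    ι₁ k M N a = a ⊗ₜ[k] 1 := rfl

lemma hb_i2_apply {M N : Type*} [Ring M] [Algebra k M] [Ring N] [Algebra k N] (b : N) :
    ι₂ k M N b = (1 : M) ⊗ₜ[k] b := rfl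

lemma tensor_comm_of_comm {M N : Type*} [Ring M] [Algebra k M] [Ring N] [Algebra k N]
    (hM : ∀ x y : M, x * y = y * x) (hN : ∀ x y : N, x * y = y * x) :
    ∀ x y : M ⊗[k] N, x * y = y * x := by
  intro x y
  induction x using TensorProduct.induction_on with
  | zero => simp
  | tmul a b =>
    induction y using TensorProduct.induction_on with
    | zero => simp
    | tmul c d => simp [Algebra.TensorProduct.tmul_mul_tmul, hM a c, hN b d]
    | add u v hu hv => simp only [mul_add, add_mul, hu, hv]
  | add u v hu hv => simp only [mul_add, add_mul, hu, hv]

section AlgMor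

variable {M N P M' N' : Type*} [Ring M] [Algebra k M] [Ring N] [Algebra k N]
  [Ring P] [Algebra k P] [Ring M'] [Algebra k M'] [Ring N'] [Algebra k N']

lemma isAlg_id : IsAlgebraMorphism k M M LinearMap.id := ⟨fun _ _ => rfl, rfl⟩

lemma isAlg_comp {g : N →ₗ[k] P} {f : M →ₗ[k] N} (hg : IsAlgebraMorphism k N P g)
    (hf : IsAlgebraMorphism k M N f) : IsAlgebraMorphism k M P (g.comp f) :=
  ⟨fun a b => by simp [hf.1, hg.1], by simp [hf.2, hg.2]⟩

lemma isAlg_of_tmul (f : M ⊗[k] N →ₗ[k] P) (h1 : f 1 = 1)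
    (hm : ∀ (a c : M) (b d : N), f ((a * c) ⊗ₜ (b * d)) = f (a ⊗ₜ b) * f (c ⊗ₜ d)) :
    IsAlgebraMorphism k (M ⊗[k] N) P f := by
  refine ⟨fun x y => ?_, h1⟩
  induction x using TensorProduct.induction_on with
  | zero => simp
  | tmul a b =>
    induction y using TensorProduct.induction_on with
    | zero => simp
    | tmul c d => simpa [Algebra.TensorProduct.tmul_mul_tmul] using hm a c b d
    | add u v hu hv => simp only [mul_add, map_add, hu, hv]
  | add u v hu hv => simp only [add_mul, map_add, hu, hv]

lemma isAlg_map {f : M →ₗ[k] M'} {g : N →ₗ[k] N'} (hf : IsAlgebraMorphism k M M' f)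
    (hg : IsAlgebraMorphism k N N' g) :
    IsAlgebraMorphism k (M ⊗[k] N) (M' ⊗[k] N') (TensorProduct.map f g) := by
  refine isAlg_of_tmul _ ?_ ?_
  · rw [Algebra.TensorProduct.one_def]
    simp [hf.2, hg.2, Algebra.TensorProduct.one_def]
  · intro a c b d
    simp [hf.1, hg.1, Algebra.TensorProduct.tmul_mul_tmul]

lemma isAlg_i1 : IsAlgebraMorphism k M (M ⊗[k] N) (ι₁ k M N) := by
  refine ⟨fun a b => ?_, ?_⟩
  · simp [hb_i1_apply, Algebra.TensorProduct.tmul_mul_tmul]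
  · rw [hb_i1_apply, Algebra.TensorProduct.one_def]

lemma isAlg_i2 : IsAlgebraMorphism k N (M ⊗[k] N) (ι₂ k M N) := by
  refine ⟨fun a b => ?_, ?_⟩
  · simp [hb_i2_apply, Algebra.TensorProduct.tmul_mul_tmul]
  · rw [hb_i2_apply, Algebra.TensorProduct.one_def]

lemma isAlg_assoc : IsAlgebraMorphism k ((M ⊗[k] N) ⊗[k] P) (M ⊗[k] (N ⊗[k] P))
    (TensorProduct.assoc k M N P).toLinearMap := by
  have h : ∀ x, (TensorProduct.assoc k M N P).toLinearMap x
      = Algebra.TensorProduct.assoc k k k M N P x := fun _ => rfl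
  exact ⟨fun a b => by rw [h, h, h]; exact map_mul _ a b, by rw [h]; exact map_one _⟩

lemma isAlg_comp_mul' {f : M →ₗ[k] N} (hf : IsAlgebraMorphism k M N f) :
    f.comp (LinearMap.mul' k M) = (LinearMap.mul' k N).comp (TensorProduct.map f f) := by
  apply TensorProduct.ext'
  intro x y
  simp [hf.1]

lemma isAlg_mul'_map {f : M →ₗ[k] N} (hf : IsAlgebraMorphism k M N f) (x : M ⊗[k] M) :
    f (LinearMap.mul' k M x) = LinearMap.mul' k N (TensorProduct.map f f x) :=
  LinearMap.congr_fun (isAlg_comp_mul' hf) x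

lemma isAlg_comp_unit {f : M →ₗ[k] N} (hf : IsAlgebraMorphism k M N f) :
    f.comp (Algebra.linearMap k M) = Algebra.linearMap k N := by
  apply LinearMap.ext; intro c
  simp only [LinearMap.comp_apply, Algebra.linearMap_apply]
  rw [Algebra.algebraMap_eq_smul_one, Algebra.algebraMap_eq_smul_one, map_smul, hf.2]

end AlgMor

section MapJuggle

variable {M₁ M₂ M₃ N₁ N₂ N₃ : Type*}
  [AddCommGroup M₁] [Module k M₁] [AddCommGroup M₂] [Module k M₂]
  [AddCommGroup M₃] [Module k M₃] [AddCommGroup N₁] [Module k N₁]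
  [AddCommGroup N₂] [Module k N₂] [AddCommGroup N₃] [Module k N₃]

lemma map_right_split (f : M₁ →ₗ[k] M₂) (g₂ : N₂ →ₗ[k] N₃) (g₁ : N₁ →ₗ[k] N₂) :
    TensorProduct.map f (g₂.comp g₁)
      = (TensorProduct.map f g₂).comp (TensorProduct.map LinearMap.id g₁) := by
  rw [← TensorProduct.map_comp, LinearMap.comp_id]

lemma map_right_split' (f : M₁ →ₗ[k] M₂) (g₂ : N₂ →ₗ[k] N₃) (g₁ : N₁ →ₗ[k] N₂) :
    TensorProduct.map f (g₂.comp g₁)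
      = (TensorProduct.map LinearMap.id g₂).comp (TensorProduct.map f g₁) := by
  rw [← TensorProduct.map_comp, LinearMap.id_comp]

lemma map_left_split (f₂ : M₂ →ₗ[k] M₃) (f₁ : M₁ →ₗ[k] M₂) (g : N₁ →ₗ[k] N₂) :
    TensorProduct.map (f₂.comp f₁) g
      = (TensorProduct.map f₂ g).comp (TensorProduct.map f₁ LinearMap.id) := by
  rw [← TensorProduct.map_comp, LinearMap.comp_id]

lemma map_left_split' (f₂ : M₂ →ₗ[k] M₃) (f₁ : M₁ →ₗ[k] M₂) (g : N₁ →ₗ[k] N₂) :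
    TensorProduct.map (f₂.comp f₁) g
      = (TensorProduct.map f₂ LinearMap.id).comp (TensorProduct.map f₁ g) := by
  rw [← TensorProduct.map_comp, LinearMap.id_comp]

end MapJuggle

section MulJuggle

variable {B C : Type*} [Ring B] [Algebra k B] [Ring C] [Algebra k C]

lemma mul_triple :
    ((LinearMap.mul' k B).comp
        (TensorProduct.map (LinearMap.id : B →ₗ[k] B) (LinearMap.mul' k B))).comp
        (TensorProduct.assoc k B B B).toLinearMap
      = (LinearMap.mul' k B).comp
          (TensorProduct.map (LinearMap.mul' k B) (LinearMap.id : B →ₗ[k] B)) := by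
  apply TensorProduct.ext_threefold
  intro x y z
  simp [mul_assoc]

lemma mul_triple_apply (y : (B ⊗[k] B) ⊗[k] B) :
    LinearMap.mul' k B
        (TensorProduct.map LinearMap.id (LinearMap.mul' k B)
          (TensorProduct.assoc k B B B y))
      = LinearMap.mul' k B (TensorProduct.map (LinearMap.mul' k B) LinearMap.id y) :=
  LinearMap.congr_fun mul_triple y

lemma mul_eta_right :
    (LinearMap.mul' k B).comp
        (TensorProduct.map (LinearMap.id : B →ₗ[k] B) (Algebra.linearMap k B))
      = (TensorProduct.rid k B).toLinearMap := by
  apply TensorProduct.ext'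
  intro b c
  simp [Algebra.algebraMap_eq_smul_one, mul_smul_comm]

lemma mul_eta_left :
    (LinearMap.mul' k B).comp
        (TensorProduct.map (Algebra.linearMap k B) (LinearMap.id : B →ₗ[k] B))
      = (TensorProduct.lid k B).toLinearMap := by
  apply TensorProduct.ext'
  intro c b
  simp [Algebra.algebraMap_eq_smul_one, smul_mul_assoc]

end MulJuggle

section LidRidNat

variable {V W : Type*} [AddCommGroup V] [Module k V] [AddCommGroup W] [Module k W]

lemma rid_nat (f : V →ₗ[k] W) :
    (TensorProduct.rid k W).toLinearMap.comp (TensorProduct.map f (LinearMap.id : k →ₗ[k] k))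
      = f.comp (TensorProduct.rid k V).toLinearMap := by
  apply TensorProduct.ext'; intro b c; simp

lemma lid_nat (f : V →ₗ[k] W) :
    (TensorProduct.lid k W).toLinearMap.comp (TensorProduct.map (LinearMap.id : k →ₗ[k] k) f)
      = f.comp (TensorProduct.lid k V).toLinearMap := by
  apply TensorProduct.ext'; intro c b; simp

end LidRidNat



section Conv

variable {C : Type*} [AddCommGroup C] [Module k C]
variable {B B' : Type*} [Ring B] [Algebra k B] [Ring B'] [Algebra k B']

/-- convolution product on `Hom(C, B)` with respect to a comultiplication `δ`. -/
def conv (δ : C →ₗ[k] C ⊗[k] C) (f g : C →ₗ[k] B) : C →ₗ[k] B :=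
  (LinearMap.mul' k B).comp ((TensorProduct.map f g).comp δ)

/-- convolution unit. -/
def cunit (e : C →ₗ[k] k) : C →ₗ[k] B := (Algebra.linearMap k B).comp e

lemma conv_apply (δ : C →ₗ[k] C ⊗[k] C) (f g : C →ₗ[k] B) (c : C) :
    conv δ f g c = LinearMap.mul' k B (TensorProduct.map f g (δ c)) := rfl

lemma cunit_apply (e : C →ₗ[k] k) (c : C) :
    (cunit e : C →ₗ[k] B) c = algebraMap k B (e c) := rfl

/-- Coassociativity, in map form. -/
def CoassocHyp (δ : C →ₗ[k] C ⊗[k] C) : Prop :=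
  (TensorProduct.map (LinearMap.id : C →ₗ[k] C) δ).comp δ
    = (TensorProduct.assoc k C C C).toLinearMap.comp
        ((TensorProduct.map δ (LinearMap.id : C →ₗ[k] C)).comp δ)

/-- Left counit law, in map form. -/
def CounitLeftHyp (δ : C →ₗ[k] C ⊗[k] C) (e : C →ₗ[k] k) : Prop :=
  (TensorProduct.lid k C).toLinearMap.comp
      ((TensorProduct.map e (LinearMap.id : C →ₗ[k] C)).comp δ) = LinearMap.id

/-- Right counit law, in map form. -/
def CounitRightHyp (δ : C →ₗ[k] C ⊗[k] C) (e : C →ₗ[k] k) : Prop :=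
  (TensorProduct.rid k C).toLinearMap.comp
      ((TensorProduct.map (LinearMap.id : C →ₗ[k] C) e).comp δ) = LinearMap.id

lemma map_conv_right {M M' : Type*} [AddCommGroup M] [Module k M]
    [AddCommGroup M'] [Module k M']
    (δ : C →ₗ[k] C ⊗[k] C) (f : M →ₗ[k] M') (g h : C →ₗ[k] B) :
    TensorProduct.map f (conv δ g h)
      = (TensorProduct.map LinearMap.id (LinearMap.mul' k B)).comp
          ((TensorProduct.map f (TensorProduct.map g h)).comp
            (TensorProduct.map LinearMap.id δ)) := by
  apply TensorProduct.ext'; intro m c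
  simp [conv_apply]

lemma map_conv_left {M M' : Type*} [AddCommGroup M] [Module k M]
    [AddCommGroup M'] [Module k M']
    (δ : C →ₗ[k] C ⊗[k] C) (f g : C →ₗ[k] B) (h : M →ₗ[k] M') :
    TensorProduct.map (conv δ f g) h
      = (TensorProduct.map (LinearMap.mul' k B) LinearMap.id).comp
          ((TensorProduct.map (TensorProduct.map f g) h).comp
            (TensorProduct.map δ LinearMap.id)) := by
  apply TensorProduct.ext'; intro c m
  simp [conv_apply]

lemma conv_assoc {δ : C →ₗ[k] C ⊗[k] C} (hco : CoassocHyp δ) (f g h : C →ₗ[k] B) :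
    conv δ f (conv δ g h) = conv δ (conv δ f g) h := by
  apply LinearMap.ext; intro c
  have hco' := LinearMap.congr_fun hco c
  simp only [LinearMap.comp_apply, LinearEquiv.coe_coe] at hco'
  rw [conv_apply, conv_apply, map_conv_right, map_conv_left]
  simp only [LinearMap.comp_apply, LinearEquiv.coe_coe]
  rw [hco', TensorProduct.map_map_assoc, mul_triple_apply]

lemma conv_one_left {δ : C →ₗ[k] C ⊗[k] C} {e : C →ₗ[k] k} (hcl : CounitLeftHyp δ e)
    (f : C →ₗ[k] B) : conv δ (cunit e) f = f := by
  apply LinearMap.ext; intro c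
  have hcl' := LinearMap.congr_fun hcl c
  simp only [LinearMap.comp_apply, LinearEquiv.coe_coe, LinearMap.id_apply] at hcl'
  rw [conv_apply]
  have e1 : TensorProduct.map (cunit e : C →ₗ[k] B) f
      = (TensorProduct.map (Algebra.linearMap k B) LinearMap.id).comp
          ((TensorProduct.map LinearMap.id f).comp
            (TensorProduct.map e LinearMap.id)) := by
    apply TensorProduct.ext'; intro x y; simp [cunit_apply]
  rw [e1]
  simp only [LinearMap.comp_apply]
  have m1 := LinearMap.congr_fun (mul_eta_left (k := k) (B := B))
    ((TensorProduct.map LinearMap.id f) ((TensorProduct.map e LinearMap.id) (δ c)))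
  simp only [LinearMap.comp_apply] at m1
  rw [m1]
  have m2 := LinearMap.congr_fun (lid_nat (k := k) f)
    ((TensorProduct.map e LinearMap.id) (δ c))
  simp only [LinearMap.comp_apply] at m2
  rw [m2]
  simp only [LinearEquiv.coe_coe]
  rw [hcl']

lemma conv_one_right {δ : C →ₗ[k] C ⊗[k] C} {e : C →ₗ[k] k} (hcr : CounitRightHyp δ e)
    (f : C →ₗ[k] B) : conv δ f (cunit e) = f := by
  apply LinearMap.ext; intro c
  have hcr' := LinearMap.congr_fun hcr c
  simp only [LinearMap.comp_apply, LinearEquiv.coe_coe, LinearMap.id_apply] at hcr'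
  rw [conv_apply]
  have e1 : TensorProduct.map f (cunit e : C →ₗ[k] B)
      = (TensorProduct.map LinearMap.id (Algebra.linearMap k B)).comp
          ((TensorProduct.map f LinearMap.id).comp
            (TensorProduct.map LinearMap.id e)) := by
    apply TensorProduct.ext'; intro x y; simp [cunit_apply]
  rw [e1]
  simp only [LinearMap.comp_apply]
  have m1 := LinearMap.congr_fun (mul_eta_right (k := k) (B := B))
    ((TensorProduct.map f LinearMap.id) ((TensorProduct.map LinearMap.id e) (δ c)))
  simp only [LinearMap.comp_apply] at m1
  rw [m1]
  have m2 := LinearMap.congr_fun (rid_nat (k := k) f)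
    ((TensorProduct.map LinearMap.id e) (δ c))
  simp only [LinearMap.comp_apply] at m2
  rw [m2]
  simp only [LinearEquiv.coe_coe]
  rw [hcr']

/-- postcomposition with an algebra morphism distributes over convolution. -/
lemma comp_conv {δ : C →ₗ[k] C ⊗[k] C} {ψ : B →ₗ[k] B'}
    (hψ : IsAlgebraMorphism k B B' ψ) (f g : C →ₗ[k] B) :
    ψ.comp (conv δ f g) = conv δ (ψ.comp f) (ψ.comp g) := by
  apply LinearMap.ext; intro c
  simp only [LinearMap.comp_apply, conv_apply]
  rw [isAlg_mul'_map hψ]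
  congr 1
  rw [← LinearMap.comp_apply, ← TensorProduct.map_comp]

lemma comp_cunit {e : C →ₗ[k] k} {ψ : B →ₗ[k] B'} (hψ : IsAlgebraMorphism k B B' ψ) :
    ψ.comp (cunit e) = (cunit e : C →ₗ[k] B') := by
  unfold cunit
  rw [← LinearMap.comp_assoc, isAlg_comp_unit hψ]

/-- uniqueness of convolution inverses. -/
lemma conv_unique {δ : C →ₗ[k] C ⊗[k] C} {e : C →ₗ[k] k} (hco : CoassocHyp δ)
    (hcl : CounitLeftHyp δ e) (hcr : CounitRightHyp δ e)
    {f g h : C →ₗ[k] B} (h1 : conv δ f g = cunit e) (h2 : conv δ g h = cunit e) :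
    f = h := by
  have : conv δ f (conv δ g h) = conv δ (conv δ f g) h := conv_assoc hco f g h
  rw [h1, h2, conv_one_right hcr, conv_one_left hcl] at this
  exact this

end Conv

end AuxTools

section HopfDev

variable {k : Type*} [Field k] {A : Type*} [Ring A] [Algebra k A]

section TTC

variable {M N P Q M' N' P' Q' : Type*}
  [AddCommGroup M] [Module k M] [AddCommGroup N] [Module k N]
  [AddCommGroup P] [Module k P] [AddCommGroup Q] [Module k Q]
  [AddCommGroup M'] [Module k M'] [AddCommGroup N'] [Module k N']
  [AddCommGroup P'] [Module k P'] [AddCommGroup Q'] [Module k Q']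

lemma ttc_nat (f : M →ₗ[k] M') (g : N →ₗ[k] N') (h : P →ₗ[k] P') (l : Q →ₗ[k] Q') :
    (TensorProduct.tensorTensorTensorComm k M' N' P' Q').toLinearMap.comp
        (TensorProduct.map (TensorProduct.map f g) (TensorProduct.map h l))
      = (TensorProduct.map (TensorProduct.map f h) (TensorProduct.map g l)).comp
          (TensorProduct.tensorTensorTensorComm k M N P Q).toLinearMap := by
  apply TensorProduct.ext_fourfold'
  intro w x y z
  simp [TensorProduct.tensorTensorTensorComm_tmul]

end TTC

section HopfStructFacts

variable (HS : HopfStruct k A)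

lemma hs_coassoc : CoassocHyp HS.Δ := by
  apply LinearMap.ext; intro h
  simpa [CoassocHyp] using HS.coassoc h

lemma hs_counitL : CounitLeftHyp HS.Δ HS.ε := by
  apply LinearMap.ext; intro h
  simpa [CounitLeftHyp] using HS.counit_left h

lemma hs_counitR : CounitRightHyp HS.Δ HS.ε := by
  apply LinearMap.ext; intro h
  simpa [CounitRightHyp] using HS.counit_right h

lemma hs_isAlg_comul : IsAlgebraMorphism k A (A ⊗[k] A) HS.Δ :=
  ⟨HS.comul_mul, HS.comul_one⟩

lemma hs_isAlg_counit : IsAlgebraMorphism k A k HS.ε :=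
  ⟨HS.counit_mul, HS.counit_one⟩

lemma hs_antiL :
    (LinearMap.mul' k A).comp
        ((TensorProduct.map HS.S LinearMap.id).comp HS.Δ) = cunit HS.ε := by
  apply LinearMap.ext; intro h
  simpa [cunit_apply] using HS.antipode_left h

lemma hs_antiR :
    (LinearMap.mul' k A).comp
        ((TensorProduct.map LinearMap.id HS.S).comp HS.Δ) = cunit HS.ε := by
  apply LinearMap.ext; intro h
  simpa [cunit_apply] using HS.antipode_right h

/-- `conv Δ f (f∘S) = unit`, for an algebra morphism `f`. -/
lemma hs_conv_inv_right {B : Type*} [Ring B] [Algebra k B] {f : A →ₗ[k] B}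
    (hf : IsAlgebraMorphism k A B f) :
    conv HS.Δ f (f.comp HS.S) = cunit HS.ε := by
  apply LinearMap.ext; intro a
  rw [conv_apply, map_right_split f f HS.S]
  simp only [LinearMap.comp_apply]
  rw [← isAlg_mul'_map hf]
  have h1 := LinearMap.congr_fun (hs_antiR HS) a
  simp only [LinearMap.comp_apply] at h1
  rw [h1, cunit_apply, cunit_apply]
  exact LinearMap.congr_fun (isAlg_comp_unit hf) (HS.ε a)

lemma hs_conv_inv_left {B : Type*} [Ring B] [Algebra k B] {f : A →ₗ[k] B}
    (hf : IsAlgebraMorphism k A B f) :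
    conv HS.Δ (f.comp HS.S) f = cunit HS.ε := by
  apply LinearMap.ext; intro a
  rw [conv_apply, map_left_split f HS.S f]
  simp only [LinearMap.comp_apply]
  rw [← isAlg_mul'_map hf]
  have h1 := LinearMap.congr_fun (hs_antiL HS) a
  simp only [LinearMap.comp_apply, cunit_apply] at h1
  rw [h1, cunit_apply]
  exact LinearMap.congr_fun (isAlg_comp_unit hf) (HS.ε a)

lemma hs_S_one : HS.S 1 = 1 := by
  have h := HS.antipode_left 1
  rw [HS.comul_one, HS.counit_one, (algebraMap k A).map_one,
    Algebra.TensorProduct.one_def] at h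
  simpa using h

lemma hs_counit_S : HS.ε.comp HS.S = HS.ε := by
  apply LinearMap.ext; intro a
  have h1 := LinearMap.congr_fun (hs_antiL HS) a
  simp only [LinearMap.comp_apply, cunit_apply] at h1
  have h2 := congrArg HS.ε h1
  rw [isAlg_mul'_map (hs_isAlg_counit HS)] at h2
  have h4 : (LinearMap.mul' k k).comp
      ((TensorProduct.map HS.ε HS.ε).comp (TensorProduct.map HS.S LinearMap.id))
      = (HS.ε.comp HS.S).comp
          ((TensorProduct.rid k A).toLinearMap.comp
            (TensorProduct.map LinearMap.id HS.ε)) := by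
    apply TensorProduct.ext'; intro x y
    simp only [LinearMap.comp_apply, TensorProduct.map_tmul, LinearMap.mul'_apply,
      LinearMap.id_apply, LinearEquiv.coe_coe, TensorProduct.rid_tmul, map_smul]
    simp [smul_eq_mul, mul_comm]
  have h5 := LinearMap.congr_fun h4 (HS.Δ a)
  simp only [LinearMap.comp_apply, LinearEquiv.coe_coe] at h5
  rw [h5] at h2
  rw [HS.counit_right a] at h2
  simp only [LinearMap.comp_apply]
  rw [h2]
  simp [Algebra.algebraMap_eq_smul_one, HS.counit_one]

end HopfStructFacts

end HopfDev

section SMulBlock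

set_option maxHeartbeats 1000000
set_option synthInstance.maxHeartbeats 400000

variable {k : Type*} [Field k] {A : Type*} [Ring A] [Algebra k A]

/-- the tensor-square comultiplication on `A ⊗ A`. -/
def hsΔ₂ (HS : HopfStruct k A) : A ⊗[k] A →ₗ[k] (A ⊗[k] A) ⊗[k] (A ⊗[k] A) :=
  (TensorProduct.tensorTensorTensorComm k A A A A).toLinearMap.comp
    (TensorProduct.map HS.Δ HS.Δ)

/-- the tensor-square counit on `A ⊗ A`. -/
def hsε₂ (HS : HopfStruct k A) : A ⊗[k] A →ₗ[k] k :=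
  (LinearMap.mul' k k).comp (TensorProduct.map HS.ε HS.ε)

variable (HS : HopfStruct k A)

lemma mulmul_ttc :
    ((LinearMap.mul' k (A ⊗[k] A))) =
      (TensorProduct.map (LinearMap.mul' k A) (LinearMap.mul' k A)).comp
        (TensorProduct.tensorTensorTensorComm k A A A A).toLinearMap := by
  apply TensorProduct.ext_fourfold'
  intro w x y z
  simp [TensorProduct.tensorTensorTensorComm_tmul, Algebra.TensorProduct.tmul_mul_tmul]

lemma mul4_ttc (hcomm : ∀ x y : A, x * y = y * x) :
    ((LinearMap.mul' k A).comp
        (TensorProduct.map (LinearMap.mul' k A) (LinearMap.mul' k A))).comp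
      (TensorProduct.tensorTensorTensorComm k A A A A).toLinearMap
    = (LinearMap.mul' k A).comp
        (TensorProduct.map (LinearMap.mul' k A) (LinearMap.mul' k A)) := by
  apply TensorProduct.ext_fourfold'
  intro w x y z
  simp only [LinearMap.comp_apply, LinearEquiv.coe_coe,
    TensorProduct.tensorTensorTensorComm_tmul, TensorProduct.map_tmul,
    LinearMap.mul'_apply]
  rw [mul_assoc, mul_assoc, ← mul_assoc y x z, hcomm y x, mul_assoc]

lemma hs_e1 :
    (TensorProduct.map LinearMap.id (hsΔ₂ HS)).comp
        (TensorProduct.tensorTensorTensorComm k A A A A).toLinearMap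
      = ((TensorProduct.map LinearMap.id
            (TensorProduct.tensorTensorTensorComm k A A A A).toLinearMap).comp
          ((TensorProduct.tensorTensorTensorComm k A (A ⊗[k] A) A (A ⊗[k] A)).toLinearMap.comp
            (TensorProduct.map (TensorProduct.map LinearMap.id HS.Δ)
              (TensorProduct.map LinearMap.id HS.Δ)))) := by
  apply TensorProduct.ext_fourfold'
  intro w x y z
  simp [hsΔ₂, TensorProduct.tensorTensorTensorComm_tmul]

lemma hs_e2 :
    (TensorProduct.map (hsΔ₂ HS) LinearMap.id).comp
        (TensorProduct.tensorTensorTensorComm k A A A A).toLinearMap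
      = ((TensorProduct.map
            (TensorProduct.tensorTensorTensorComm k A A A A).toLinearMap LinearMap.id).comp
          ((TensorProduct.tensorTensorTensorComm k (A ⊗[k] A) A (A ⊗[k] A) A).toLinearMap.comp
            (TensorProduct.map (TensorProduct.map HS.Δ LinearMap.id)
              (TensorProduct.map HS.Δ LinearMap.id)))) := by
  apply TensorProduct.ext_fourfold'
  intro w x y z
  simp [hsΔ₂, TensorProduct.tensorTensorTensorComm_tmul]

lemma hs_shuffle6 :
    (TensorProduct.map LinearMap.id
          (TensorProduct.tensorTensorTensorComm k A A A A).toLinearMap).comp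
        ((TensorProduct.tensorTensorTensorComm k A (A ⊗[k] A) A (A ⊗[k] A)).toLinearMap.comp
          (TensorProduct.map (TensorProduct.assoc k A A A).toLinearMap
            (TensorProduct.assoc k A A A).toLinearMap))
      = (TensorProduct.assoc k (A ⊗[k] A) (A ⊗[k] A) (A ⊗[k] A)).toLinearMap.comp
          ((TensorProduct.map
              (TensorProduct.tensorTensorTensorComm k A A A A).toLinearMap
              LinearMap.id).comp
            (TensorProduct.tensorTensorTensorComm k (A ⊗[k] A) A (A ⊗[k] A) A).toLinearMap) := by
  apply TensorProduct.ext_fourfold'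
  intro w x y z
  induction w using TensorProduct.induction_on with
  | zero => simp only [TensorProduct.zero_tmul, map_zero]
  | add u v hu hv =>
    simp only [TensorProduct.add_tmul, map_add, hu, hv]
  | tmul w₁ w₂ =>
    induction y using TensorProduct.induction_on with
    | zero => simp only [TensorProduct.zero_tmul, TensorProduct.tmul_zero, map_zero]
    | add u v hu hv =>
      simp only [TensorProduct.add_tmul, TensorProduct.tmul_add, map_add, hu, hv]
    | tmul y₁ y₂ =>
      simp [TensorProduct.tensorTensorTensorComm_tmul]

lemma hs_coassoc2 : CoassocHyp (hsΔ₂ HS) := by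
  unfold CoassocHyp
  apply TensorProduct.ext'
  intro a b
  have lhs0 : ((TensorProduct.map LinearMap.id (hsΔ₂ HS)).comp (hsΔ₂ HS)) (a ⊗ₜ[k] b)
      = (TensorProduct.map LinearMap.id (hsΔ₂ HS))
          ((TensorProduct.tensorTensorTensorComm k A A A A).toLinearMap
            (HS.Δ a ⊗ₜ HS.Δ b)) := by
    simp [hsΔ₂]
  rw [lhs0, ← LinearMap.comp_apply, hs_e1]
  have rhs0 : ((TensorProduct.map (hsΔ₂ HS) LinearMap.id).comp (hsΔ₂ HS)) (a ⊗ₜ[k] b)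
      = (TensorProduct.map (hsΔ₂ HS) LinearMap.id)
          ((TensorProduct.tensorTensorTensorComm k A A A A).toLinearMap
            (HS.Δ a ⊗ₜ HS.Δ b)) := by
    simp [hsΔ₂]
  rw [show ((TensorProduct.assoc k (A ⊗[k] A) (A ⊗[k] A) (A ⊗[k] A)).toLinearMap.comp
        ((TensorProduct.map (hsΔ₂ HS) LinearMap.id).comp (hsΔ₂ HS))) (a ⊗ₜ[k] b)
      = (TensorProduct.assoc k (A ⊗[k] A) (A ⊗[k] A) (A ⊗[k] A)).toLinearMap
          (((TensorProduct.map (hsΔ₂ HS) LinearMap.id).comp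
            (TensorProduct.tensorTensorTensorComm k A A A A).toLinearMap)
            (HS.Δ a ⊗ₜ HS.Δ b)) by
    simp only [LinearMap.comp_apply]; rw [← rhs0]; simp [hsΔ₂], hs_e2]
  simp only [LinearMap.comp_apply, TensorProduct.map_tmul, LinearMap.id_apply]
  rw [HS.coassoc a, HS.coassoc b]
  have := LinearMap.congr_fun (hs_shuffle6 (k := k) (A := A))
    ((TensorProduct.map HS.Δ LinearMap.id (HS.Δ a))
      ⊗ₜ[k] (TensorProduct.map HS.Δ LinearMap.id (HS.Δ b)))
  simp only [LinearMap.comp_apply, TensorProduct.map_tmul, LinearEquiv.coe_coe,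
    LinearMap.id_apply] at this ⊢
  exact this

lemma hs_counit_inv_left : ∀ c : A,
    TensorProduct.map HS.ε LinearMap.id (HS.Δ c) = (TensorProduct.lid k A).symm c := by
  intro c
  apply (TensorProduct.lid k A).injective
  simp [HS.counit_left c]

lemma hs_counit_inv_right : ∀ c : A,
    TensorProduct.map LinearMap.id HS.ε (HS.Δ c) = (TensorProduct.rid k A).symm c := by
  intro c
  apply (TensorProduct.rid k A).injective
  simp [HS.counit_right c]

lemma hs_counitL2 : CounitLeftHyp (hsΔ₂ HS) (hsε₂ HS) := by
  unfold CounitLeftHyp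
  apply TensorProduct.ext'
  intro a b
  have e3 : (TensorProduct.map (hsε₂ HS) LinearMap.id).comp
        (TensorProduct.tensorTensorTensorComm k A A A A).toLinearMap
      = ((TensorProduct.map (LinearMap.mul' k k) LinearMap.id).comp
          ((TensorProduct.tensorTensorTensorComm k k A k A).toLinearMap.comp
            (TensorProduct.map (TensorProduct.map HS.ε LinearMap.id)
              (TensorProduct.map HS.ε LinearMap.id)))) := by
    apply TensorProduct.ext_fourfold'
    intro w x y z
    simp [hsε₂, TensorProduct.tensorTensorTensorComm_tmul]
  simp only [LinearMap.comp_apply, LinearMap.id_apply, LinearEquiv.coe_coe]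
  have l0 : (hsΔ₂ HS) (a ⊗ₜ[k] b)
      = (TensorProduct.tensorTensorTensorComm k A A A A).toLinearMap
          (HS.Δ a ⊗ₜ HS.Δ b) := by simp [hsΔ₂]
  rw [l0, ← LinearMap.comp_apply (TensorProduct.map (hsε₂ HS) LinearMap.id), e3]
  simp only [LinearMap.comp_apply, TensorProduct.map_tmul, LinearMap.id_apply]
  rw [hs_counit_inv_left HS a, hs_counit_inv_left HS b]
  simp [TensorProduct.tensorTensorTensorComm_tmul]

lemma hs_counitR2 : CounitRightHyp (hsΔ₂ HS) (hsε₂ HS) := by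
  unfold CounitRightHyp
  apply TensorProduct.ext'
  intro a b
  have e4 : (TensorProduct.map LinearMap.id (hsε₂ HS)).comp
        (TensorProduct.tensorTensorTensorComm k A A A A).toLinearMap
      = ((TensorProduct.map LinearMap.id (LinearMap.mul' k k)).comp
          ((TensorProduct.tensorTensorTensorComm k A k A k).toLinearMap.comp
            (TensorProduct.map (TensorProduct.map LinearMap.id HS.ε)
              (TensorProduct.map LinearMap.id HS.ε)))) := by
    apply TensorProduct.ext_fourfold'
    intro w x y z
    simp [hsε₂, TensorProduct.tensorTensorTensorComm_tmul]
  simp only [LinearMap.comp_apply, LinearMap.id_apply, LinearEquiv.coe_coe]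
  have l0 : (hsΔ₂ HS) (a ⊗ₜ[k] b)
      = (TensorProduct.tensorTensorTensorComm k A A A A).toLinearMap
          (HS.Δ a ⊗ₜ HS.Δ b) := by simp [hsΔ₂]
  rw [l0, ← LinearMap.comp_apply (TensorProduct.map LinearMap.id (hsε₂ HS)), e4]
  simp only [LinearMap.comp_apply, TensorProduct.map_tmul, LinearMap.id_apply]
  rw [hs_counit_inv_right HS a, hs_counit_inv_right HS b]
  simp [TensorProduct.tensorTensorTensorComm_tmul]

lemma hs_counit_mul' :
    HS.ε.comp (LinearMap.mul' k A) = hsε₂ HS := by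
  apply TensorProduct.ext'
  intro a b
  simp [hsε₂, HS.counit_mul]

lemma hs_S_mul (hcomm : ∀ x y : A, x * y = y * x) :
    HS.S.comp (LinearMap.mul' k A)
      = (LinearMap.mul' k A).comp (TensorProduct.map HS.S HS.S) := by
  have u1 : conv (hsΔ₂ HS) (HS.S.comp (LinearMap.mul' k A)) (LinearMap.mul' k A)
      = cunit (hsε₂ HS) := by
    apply TensorProduct.ext'
    intro a b
    rw [conv_apply]
    rw [map_left_split' HS.S (LinearMap.mul' k A) (LinearMap.mul' k A)]
    simp only [LinearMap.comp_apply]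
    have l0 : (hsΔ₂ HS) (a ⊗ₜ[k] b)
        = (TensorProduct.tensorTensorTensorComm k A A A A).toLinearMap
            (HS.Δ a ⊗ₜ HS.Δ b) := by simp [hsΔ₂]
    rw [l0, ← LinearMap.comp_apply
        (TensorProduct.map (LinearMap.mul' k A) (LinearMap.mul' k A)),
      ← mulmul_ttc]
    rw [show (LinearMap.mul' k (A ⊗[k] A)) (HS.Δ a ⊗ₜ[k] HS.Δ b) = HS.Δ a * HS.Δ b from
      LinearMap.mul'_apply]
    rw [← HS.comul_mul a b]
    have h1 := LinearMap.congr_fun (hs_antiL HS) (a * b)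
    simp only [LinearMap.comp_apply, cunit_apply] at h1
    have h9 := LinearMap.congr_fun (hs_counit_mul' HS) (a ⊗ₜ[k] b)
    simp only [LinearMap.comp_apply, LinearMap.mul'_apply] at h9
    rw [h1, cunit_apply, h9]
  have u2 : conv (hsΔ₂ HS) (LinearMap.mul' k A)
      ((LinearMap.mul' k A).comp (TensorProduct.map HS.S HS.S)) = cunit (hsε₂ HS) := by
    apply TensorProduct.ext'
    intro a b
    rw [conv_apply]
    rw [map_right_split (LinearMap.mul' k A) (LinearMap.mul' k A)
      (TensorProduct.map HS.S HS.S)]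
    simp only [LinearMap.comp_apply]
    have l0 : (hsΔ₂ HS) (a ⊗ₜ[k] b)
        = (TensorProduct.tensorTensorTensorComm k A A A A).toLinearMap
            (HS.Δ a ⊗ₜ HS.Δ b) := by simp [hsΔ₂]
    rw [l0]
    have e5 : (TensorProduct.map LinearMap.id (TensorProduct.map HS.S HS.S)).comp
          (TensorProduct.tensorTensorTensorComm k A A A A).toLinearMap
        = (TensorProduct.tensorTensorTensorComm k A A A A).toLinearMap.comp
            (TensorProduct.map (TensorProduct.map LinearMap.id HS.S)
              (TensorProduct.map LinearMap.id HS.S)) := by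
      apply TensorProduct.ext_fourfold'
      intro w x y z
      simp [TensorProduct.tensorTensorTensorComm_tmul]
    rw [← LinearMap.comp_apply (TensorProduct.map LinearMap.id (TensorProduct.map HS.S HS.S)),
      e5]
    simp only [LinearMap.comp_apply, TensorProduct.map_tmul, LinearEquiv.coe_coe]
    have h6 := LinearMap.congr_fun (mul4_ttc (k := k) hcomm)
      ((TensorProduct.map LinearMap.id HS.S (HS.Δ a))
        ⊗ₜ[k] (TensorProduct.map LinearMap.id HS.S (HS.Δ b)))
    simp only [LinearMap.comp_apply, LinearEquiv.coe_coe] at h6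
    rw [h6]
    simp only [TensorProduct.map_tmul, LinearMap.mul'_apply]
    have ha := LinearMap.congr_fun (hs_antiR HS) a
    have hb := LinearMap.congr_fun (hs_antiR HS) b
    simp only [LinearMap.comp_apply, cunit_apply] at ha hb
    rw [ha, hb, ← map_mul, cunit_apply]
    congr 1
  exact conv_unique (hs_coassoc2 HS) (hs_counitL2 HS) (hs_counitR2 HS) u1 u2

lemma hs_isAlg_S (hcomm : ∀ x y : A, x * y = y * x) :
    IsAlgebraMorphism k A A HS.S := by
  refine ⟨fun x y => ?_, hs_S_one HS⟩
  have := LinearMap.congr_fun (hs_S_mul HS hcomm) (x ⊗ₜ[k] y)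
  simpa using this

lemma hs_S_S (hcomm : ∀ x y : A, x * y = y * x) :
    HS.S.comp HS.S = LinearMap.id := by
  symm
  have u1 : conv HS.Δ LinearMap.id HS.S = cunit HS.ε := by
    unfold conv
    exact hs_antiR HS
  have u2 : conv HS.Δ HS.S (HS.S.comp HS.S) = cunit HS.ε := by
    apply LinearMap.ext
    intro a
    rw [conv_apply]
    have e1 : TensorProduct.map HS.S (HS.S.comp HS.S)
        = (TensorProduct.map HS.S HS.S).comp (TensorProduct.map LinearMap.id HS.S) := by
      rw [← TensorProduct.map_comp, LinearMap.comp_id]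
    rw [e1]
    simp only [LinearMap.comp_apply]
    have h2 := LinearMap.congr_fun (hs_S_mul HS hcomm)
      (TensorProduct.map LinearMap.id HS.S (HS.Δ a))
    simp only [LinearMap.comp_apply] at h2
    rw [← h2]
    have h3 := LinearMap.congr_fun (hs_antiR HS) a
    simp only [LinearMap.comp_apply, cunit_apply] at h3
    rw [h3, cunit_apply, Algebra.algebraMap_eq_smul_one, map_smul, hs_S_one HS]
  exact conv_unique (hs_coassoc HS) (hs_counitL HS) (hs_counitR HS) u1 u2

end SMulBlock

section BraceBasics

set_option maxHeartbeats 1000000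
set_option synthInstance.maxHeartbeats 400000

variable {k : Type*} [Field k] {A : Type*} [Ring A] [Algebra k A]

/-- left counit contraction `x ⊗ y ↦ e(x) y`. -/
def ELc (e : A →ₗ[k] k) : A ⊗[k] A →ₗ[k] A :=
  (TensorProduct.lid k A).toLinearMap.comp (TensorProduct.map e LinearMap.id)

/-- right counit contraction `x ⊗ y ↦ e(y) x`. -/
def ERc (e : A →ₗ[k] k) : A ⊗[k] A →ₗ[k] A :=
  (TensorProduct.rid k A).toLinearMap.comp (TensorProduct.map LinearMap.id e)

lemma ELc_apply (e : A →ₗ[k] k) (x y : A) : ELc e (x ⊗ₜ y) = e x • y := by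
  simp [ELc]

lemma ERc_apply (e : A →ₗ[k] k) (x y : A) : ERc e (x ⊗ₜ y) = e y • x := by
  simp [ERc]

lemma isAlg_ELc {e : A →ₗ[k] k} (he : IsAlgebraMorphism k A k e) :
    IsAlgebraMorphism k (A ⊗[k] A) A (ELc e) := by
  refine isAlg_of_tmul _ ?_ ?_
  · rw [Algebra.TensorProduct.one_def, ELc_apply, he.2]; simp
  · intro a c b d
    rw [ELc_apply, ELc_apply, ELc_apply, he.1]
    rw [smul_mul_smul_comm]

lemma isAlg_ERc {e : A →ₗ[k] k} (he : IsAlgebraMorphism k A k e) :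
    IsAlgebraMorphism k (A ⊗[k] A) A (ERc e) := by
  refine isAlg_of_tmul _ ?_ ?_
  · rw [Algebra.TensorProduct.one_def, ERc_apply, he.2]; simp
  · intro a c b d
    rw [ERc_apply, ERc_apply, ERc_apply, he.1]
    rw [smul_mul_smul_comm]

lemma ELc_comp_i1 (e : A →ₗ[k] k) : (ELc e).comp (ι₁ k A A) = cunit e := by
  apply LinearMap.ext; intro a
  simp only [LinearMap.comp_apply, hb_i1_apply, ELc_apply, cunit_apply]
  rw [Algebra.algebraMap_eq_smul_one]

lemma ELc_comp_i2 (e : A →ₗ[k] k) (he : e 1 = 1) :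
    (ELc e).comp (ι₂ k A A) = LinearMap.id := by
  apply LinearMap.ext; intro a
  simp [hb_i2_apply, ELc_apply, he]

lemma ERc_comp_i1 (e : A →ₗ[k] k) (he : e 1 = 1) :
    (ERc e).comp (ι₁ k A A) = LinearMap.id := by
  apply LinearMap.ext; intro a
  simp [hb_i1_apply, ERc_apply, he]

lemma ERc_comp_i2 (e : A →ₗ[k] k) : (ERc e).comp (ι₂ k A A) = cunit e := by
  apply LinearMap.ext; intro a
  simp only [LinearMap.comp_apply, hb_i2_apply, ERc_apply, cunit_apply]
  rw [Algebra.algebraMap_eq_smul_one]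

/-- `conv` of algebra morphisms into a commutative algebra is an algebra morphism. -/
lemma isAlg_mulmap {B : Type*} [Ring B] [Algebra k B]
    (hcommB : ∀ x y : B, x * y = y * x) {f g : A →ₗ[k] B}
    (hf : IsAlgebraMorphism k A B f) (hg : IsAlgebraMorphism k A B g) :
    IsAlgebraMorphism k (A ⊗[k] A) B
      ((LinearMap.mul' k B).comp (TensorProduct.map f g)) := by
  refine isAlg_of_tmul _ ?_ ?_
  · rw [Algebra.TensorProduct.one_def]
    simp [hf.2, hg.2]
  · intro a c b d
    simp only [LinearMap.comp_apply, TensorProduct.map_tmul, LinearMap.mul'_apply,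
      hf.1, hg.1]
    rw [mul_assoc, ← mul_assoc (f c), hcommB (f c) (g b), mul_assoc, ← mul_assoc]

lemma conv_isAlg {B : Type*} [Ring B] [Algebra k B]
    (hcommB : ∀ x y : B, x * y = y * x) {δ : A →ₗ[k] A ⊗[k] A}
    (hδ : IsAlgebraMorphism k A (A ⊗[k] A) δ) {f g : A →ₗ[k] B}
    (hf : IsAlgebraMorphism k A B f) (hg : IsAlgebraMorphism k A B g) :
    IsAlgebraMorphism k A B (conv δ f g) := by
  have h0 : conv δ f g = ((LinearMap.mul' k B).comp (TensorProduct.map f g)).comp δ := by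
    unfold conv; rw [LinearMap.comp_assoc]
  rw [h0]
  exact isAlg_comp (isAlg_mulmap hcommB hf hg) hδ

variable (HB : HopfBrace k A)

/-- the compatibility axiom, in map form. -/
lemma hb_compat_map :
    (TensorProduct.map (LinearMap.id : A →ₗ[k] A) HB.fst.Δ).comp HB.snd.Δ
      = braceRHS k A HB.fst.Δ HB.snd.Δ HB.fst.S :=
  LinearMap.ext HB.compat

/-- nested convolution in `mul₃` normal form. -/
lemma conv_nest {B : Type*} [Ring B] [Algebra k B] (δ : A →ₗ[k] A ⊗[k] A)
    (f g h : A →ₗ[k] B) :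
    conv δ f (conv δ g h)
      = (mul₃ k B).comp
          ((TensorProduct.map f (TensorProduct.map g h)).comp
            ((TensorProduct.map (LinearMap.id : A →ₗ[k] A) δ).comp δ)) := by
  apply LinearMap.ext; intro a
  rw [conv_apply]
  have h1 := LinearMap.congr_fun (map_conv_right (B := B) δ f g h) (δ a)
  simp only [LinearMap.comp_apply] at h1
  rw [h1]
  rfl

/-- `D½ = a ↦ a_{1'} ⊗ a_{2'} ⊗ 1`. -/
def Dhalf : A →ₗ[k] A ⊗[k] (A ⊗[k] A) :=
  (TensorProduct.map (LinearMap.id : A →ₗ[k] A) (ι₁ k A A)).comp HB.snd.Δ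

/-- `K' = a ↦ a_{1'} ⊗ 1 ⊗ a_{2'}`. -/
def Kp : A →ₗ[k] A ⊗[k] (A ⊗[k] A) :=
  (TensorProduct.map (LinearMap.id : A →ₗ[k] A) (ι₂ k A A)).comp HB.snd.Δ

/-- `Ψ₁ = a ↦ a_{1'} ⊗ S(a_{2'}) ⊗ 1`. -/
def Psi1 : A →ₗ[k] A ⊗[k] (A ⊗[k] A) :=
  (TensorProduct.map (LinearMap.id : A →ₗ[k] A)
    ((ι₁ k A A).comp HB.fst.S)).comp HB.snd.Δ

/-- `x ↦ S x ⊗ 1 ⊗ 1`. -/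
def I11S : A →ₗ[k] A ⊗[k] (A ⊗[k] A) := (ι₁ k A (A ⊗[k] A)).comp HB.fst.S

/-- the threefold comultiplication of `Δ'`. -/
def D3 : A →ₗ[k] A ⊗[k] (A ⊗[k] A) :=
  (TensorProduct.map (LinearMap.id : A →ₗ[k] A) HB.snd.Δ).comp HB.snd.Δ

lemma braceRHS_eq :
    braceRHS k A HB.fst.Δ HB.snd.Δ HB.fst.S
      = conv HB.fst.Δ (Dhalf HB) (conv HB.fst.Δ (I11S HB) (Kp HB)) := by
  rw [conv_nest]
  rfl

/-- the master form of the compatibility axiom. -/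
lemma compat_conv :
    (TensorProduct.map (LinearMap.id : A →ₗ[k] A) HB.fst.Δ).comp HB.snd.Δ
      = conv HB.fst.Δ (Dhalf HB) (conv HB.fst.Δ (I11S HB) (Kp HB)) := by
  rw [hb_compat_map, braceRHS_eq]

end BraceBasics

section CounitIds

set_option maxHeartbeats 1000000
set_option synthInstance.maxHeartbeats 400000

variable {k : Type*} [Field k] {A : Type*} [Ring A] [Algebra k A]
variable (HB : HopfBrace k A)

lemma ERc_comul : (ERc HB.fst.ε).comp HB.fst.Δ = LinearMap.id := by
  unfold ERc; rw [LinearMap.comp_assoc]; exact hs_counitR HB.fst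

lemma ERc_comul' : (ERc HB.snd.ε).comp HB.snd.Δ = LinearMap.id := by
  unfold ERc; rw [LinearMap.comp_assoc]; exact hs_counitR HB.snd

lemma ELc_comul : (ELc HB.fst.ε).comp HB.fst.Δ = LinearMap.id := by
  unfold ELc; rw [LinearMap.comp_assoc]; exact hs_counitL HB.fst

lemma ELc_comul' : (ELc HB.snd.ε).comp HB.snd.Δ = LinearMap.id := by
  unfold ELc; rw [LinearMap.comp_assoc]; exact hs_counitL HB.snd

/-- contraction used to derive `ε' ∘ S = ε`. -/
def Econtr : A ⊗[k] (A ⊗[k] A) →ₗ[k] A :=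
  (ELc HB.snd.ε).comp
    (TensorProduct.map (LinearMap.id : A →ₗ[k] A) (ERc HB.fst.ε))

lemma Econtr_apply (x : A) (z : A ⊗[k] A) :
    Econtr HB (x ⊗ₜ z) = HB.snd.ε x • (ERc HB.fst.ε z) := by
  simp [Econtr, ELc]

lemma isAlg_Econtr : IsAlgebraMorphism k (A ⊗[k] (A ⊗[k] A)) A (Econtr HB) :=
  isAlg_comp (isAlg_ELc (hs_isAlg_counit HB.snd))
    (isAlg_map isAlg_id (isAlg_ERc (hs_isAlg_counit HB.fst)))

lemma Econtr_L : (Econtr HB).comp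
    ((TensorProduct.map (LinearMap.id : A →ₗ[k] A) HB.fst.Δ).comp HB.snd.Δ)
    = LinearMap.id := by
  have M1 : (Econtr HB).comp
      (TensorProduct.map (LinearMap.id : A →ₗ[k] A) HB.fst.Δ) = ELc HB.snd.ε := by
    apply TensorProduct.ext'; intro x y
    simp only [LinearMap.comp_apply, TensorProduct.map_tmul, LinearMap.id_apply,
      Econtr_apply, ELc_apply]
    rw [show ERc HB.fst.ε (HB.fst.Δ y) = y from LinearMap.congr_fun (ERc_comul HB) y]
  apply LinearMap.ext; intro a
  simp only [LinearMap.comp_apply, LinearMap.id_apply]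
  have := LinearMap.congr_fun M1 (HB.snd.Δ a)
  simp only [LinearMap.comp_apply] at this
  rw [this]
  exact LinearMap.congr_fun (ELc_comul' HB) a

lemma Econtr_Dhalf : (Econtr HB).comp (Dhalf HB) = LinearMap.id := by
  have M2 : (Econtr HB).comp
      (TensorProduct.map (LinearMap.id : A →ₗ[k] A) (ι₁ k A A)) = ELc HB.snd.ε := by
    apply TensorProduct.ext'; intro x y
    simp only [LinearMap.comp_apply, TensorProduct.map_tmul, LinearMap.id_apply,
      Econtr_apply, ELc_apply, hb_i1_apply, ERc_apply, HB.fst.counit_one, one_smul]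
  apply LinearMap.ext; intro a
  simp only [Dhalf, LinearMap.comp_apply, LinearMap.id_apply]
  have := LinearMap.congr_fun M2 (HB.snd.Δ a)
  simp only [LinearMap.comp_apply] at this
  rw [this]
  exact LinearMap.congr_fun (ELc_comul' HB) a

lemma Econtr_I11S :
    (Econtr HB).comp (I11S HB) = cunit (HB.snd.ε.comp HB.fst.S) := by
  apply LinearMap.ext; intro x
  simp only [I11S, LinearMap.comp_apply, hb_i1_apply, Econtr_apply, cunit_apply]
  rw [Algebra.TensorProduct.one_def, ERc_apply, HB.fst.counit_one, one_smul,
    Algebra.algebraMap_eq_smul_one]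

lemma Econtr_Kp : (Econtr HB).comp (Kp HB) = cunit HB.fst.ε := by
  have M3 : (Econtr HB).comp
      (TensorProduct.map (LinearMap.id : A →ₗ[k] A) (ι₂ k A A))
      = (Algebra.linearMap k A).comp
          ((LinearMap.mul' k k).comp (TensorProduct.map HB.snd.ε HB.fst.ε)) := by
    apply TensorProduct.ext'; intro x y
    simp only [LinearMap.comp_apply, TensorProduct.map_tmul, LinearMap.id_apply,
      Econtr_apply, hb_i2_apply, ERc_apply, LinearMap.mul'_apply,
      Algebra.linearMap_apply]
    rw [Algebra.algebraMap_eq_smul_one, mul_comm, mul_smul]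
    rw [smul_comm]
  have q1 : (LinearMap.mul' k k).comp (TensorProduct.map HB.snd.ε HB.fst.ε)
      = HB.fst.ε.comp (ELc HB.snd.ε) := by
    apply TensorProduct.ext'; intro x y
    simp [ELc_apply, smul_smul, mul_comm]
  apply LinearMap.ext; intro a
  simp only [Kp, LinearMap.comp_apply]
  have h1 := LinearMap.congr_fun M3 (HB.snd.Δ a)
  simp only [LinearMap.comp_apply] at h1
  rw [h1]
  have h2 := LinearMap.congr_fun q1 (HB.snd.Δ a)
  simp only [LinearMap.comp_apply] at h2
  rw [h2]
  have h3 := LinearMap.congr_fun (ELc_comul' HB) a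
  simp only [LinearMap.comp_apply, LinearMap.id_apply] at h3
  rw [h3]
  rfl

lemma counit_snd_S : HB.snd.ε.comp HB.fst.S = HB.fst.ε := by
  have hid : (LinearMap.id : A →ₗ[k] A)
      = conv HB.fst.Δ LinearMap.id (cunit (HB.snd.ε.comp HB.fst.S)) := by
    have h2 : (Econtr HB).comp
        ((TensorProduct.map (LinearMap.id : A →ₗ[k] A) HB.fst.Δ).comp HB.snd.Δ)
        = (Econtr HB).comp
            (conv HB.fst.Δ (Dhalf HB) (conv HB.fst.Δ (I11S HB) (Kp HB))) := by
      rw [compat_conv HB]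
    rw [Econtr_L, comp_conv (isAlg_Econtr HB), comp_conv (isAlg_Econtr HB),
      Econtr_Dhalf, Econtr_I11S, Econtr_Kp,
      conv_one_right (hs_counitR HB.fst)] at h2
    exact h2
  have hS : (cunit HB.fst.ε : A →ₗ[k] A) = conv HB.fst.Δ HB.fst.S LinearMap.id :=
    (hs_antiL HB.fst).symm
  have final : (cunit HB.fst.ε : A →ₗ[k] A) = cunit (HB.snd.ε.comp HB.fst.S) := by
    calc (cunit HB.fst.ε : A →ₗ[k] A)
        = conv HB.fst.Δ HB.fst.S LinearMap.id := hS
      _ = conv HB.fst.Δ HB.fst.S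
            (conv HB.fst.Δ LinearMap.id (cunit (HB.snd.ε.comp HB.fst.S))) := by
          rw [← hid]
      _ = conv HB.fst.Δ (conv HB.fst.Δ HB.fst.S LinearMap.id)
            (cunit (HB.snd.ε.comp HB.fst.S)) :=
          conv_assoc (hs_coassoc HB.fst) _ _ _
      _ = conv HB.fst.Δ (cunit HB.fst.ε) (cunit (HB.snd.ε.comp HB.fst.S)) := by
          rw [← hS]
      _ = cunit (HB.snd.ε.comp HB.fst.S) := conv_one_left (hs_counitL HB.fst) _
  apply LinearMap.ext; intro a
  have hx : ∀ c : k, HB.fst.ε ((algebraMap k A) c) = c := by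
    intro c
    rw [Algebra.algebraMap_eq_smul_one, map_smul, HB.fst.counit_one, smul_eq_mul,
      mul_one]
  have h6 := LinearMap.congr_fun final a
  simp only [cunit_apply] at h6
  have h5 := congrArg HB.fst.ε h6
  rw [hx, hx] at h5
  exact h5.symm

lemma counit_eq (hcomm : ∀ x y : A, x * y = y * x) : HB.snd.ε = HB.fst.ε := by
  have h1 := counit_snd_S HB
  have h2 := hs_S_S HB.fst hcomm
  have h3 := hs_counit_S HB.fst
  calc HB.snd.ε = HB.snd.ε.comp LinearMap.id := (LinearMap.comp_id _).symm
    _ = HB.snd.ε.comp (HB.fst.S.comp HB.fst.S) := by rw [h2]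
    _ = (HB.snd.ε.comp HB.fst.S).comp HB.fst.S := by rw [LinearMap.comp_assoc]
    _ = HB.fst.ε.comp HB.fst.S := by rw [h1]
    _ = HB.fst.ε := h3

end CounitIds

section RhoPhi

set_option maxHeartbeats 1000000
set_option synthInstance.maxHeartbeats 400000

variable {k : Type*} [Field k] {A : Type*} [Ring A] [Algebra k A]
variable (HB : HopfBrace k A)

lemma rho_conv : ρmap k A HB.fst.Δ HB.snd.Δ HB.fst.S
    = conv HB.fst.Δ ((ι₁ k A A).comp HB.fst.S) HB.snd.Δ := rfl

lemma phi_conv : φmap k A HB.fst.Δ HB.snd.Δ HB.fst.S HB.snd.S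
    = conv HB.snd.Δ
        ((ρmap k A HB.fst.Δ HB.snd.Δ HB.fst.S).comp HB.snd.S) HB.snd.Δ := by
  unfold φmap conv
  congr 1
  rw [← LinearMap.comp_assoc, ← TensorProduct.map_comp, LinearMap.comp_id,
    LinearMap.id_comp]

lemma isAlg_rho (hcomm : ∀ x y : A, x * y = y * x) : IsAlgebraMorphism k A (A ⊗[k] A)
    (ρmap k A HB.fst.Δ HB.snd.Δ HB.fst.S) := by
  rw [rho_conv]
  exact conv_isAlg (tensor_comm_of_comm hcomm hcomm) (hs_isAlg_comul HB.fst)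
    (isAlg_comp isAlg_i1 (hs_isAlg_S HB.fst hcomm)) (hs_isAlg_comul HB.snd)

lemma isAlg_phi (hcomm : ∀ x y : A, x * y = y * x) : IsAlgebraMorphism k A (A ⊗[k] A)
    (φmap k A HB.fst.Δ HB.snd.Δ HB.fst.S HB.snd.S) := by
  rw [phi_conv]
  exact conv_isAlg (tensor_comm_of_comm hcomm hcomm) (hs_isAlg_comul HB.snd)
    (isAlg_comp (isAlg_rho HB hcomm) (hs_isAlg_S HB.snd hcomm)) (hs_isAlg_comul HB.snd)

lemma rho_counitL : (ELc HB.snd.ε).comp (ρmap k A HB.fst.Δ HB.snd.Δ HB.fst.S)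
    = LinearMap.id := by
  rw [rho_conv, comp_conv (isAlg_ELc (hs_isAlg_counit HB.snd))]
  rw [← LinearMap.comp_assoc, ELc_comp_i1, ELc_comul' HB]
  have : (cunit HB.snd.ε : A →ₗ[k] A).comp HB.fst.S
      = cunit (HB.snd.ε.comp HB.fst.S) := by
    unfold cunit; rw [LinearMap.comp_assoc]
  rw [this, counit_snd_S HB]
  exact conv_one_left (hs_counitL HB.fst) _

lemma rho_counitR (hcomm : ∀ x y : A, x * y = y * x) : (ERc HB.snd.ε).comp (ρmap k A HB.fst.Δ HB.snd.Δ HB.fst.S)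
    = cunit HB.snd.ε := by
  rw [rho_conv, comp_conv (isAlg_ERc (hs_isAlg_counit HB.snd))]
  rw [← LinearMap.comp_assoc, ERc_comp_i1 _ HB.snd.counit_one, LinearMap.id_comp,
    ERc_comul' HB]
  have h1 : conv HB.fst.Δ HB.fst.S LinearMap.id = (cunit HB.fst.ε : A →ₗ[k] A) :=
    hs_antiL HB.fst
  rw [h1, counit_eq HB hcomm]

lemma rho_rhoT_right (hcomm : ∀ x y : A, x * y = y * x) : conv HB.snd.Δ (ρmap k A HB.fst.Δ HB.snd.Δ HB.fst.S)
    ((ρmap k A HB.fst.Δ HB.snd.Δ HB.fst.S).comp HB.snd.S) = cunit HB.snd.ε :=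
  hs_conv_inv_right HB.snd (isAlg_rho HB hcomm)

lemma rho_rhoT_left (hcomm : ∀ x y : A, x * y = y * x) : conv HB.snd.Δ
    ((ρmap k A HB.fst.Δ HB.snd.Δ HB.fst.S).comp HB.snd.S)
    (ρmap k A HB.fst.Δ HB.snd.Δ HB.fst.S) = cunit HB.snd.ε :=
  hs_conv_inv_left HB.snd (isAlg_rho HB hcomm)

/-- `ρ ⋆' φ = Δ'`. -/
lemma rho_phi (hcomm : ∀ x y : A, x * y = y * x) : conv HB.snd.Δ (ρmap k A HB.fst.Δ HB.snd.Δ HB.fst.S)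
    (φmap k A HB.fst.Δ HB.snd.Δ HB.fst.S HB.snd.S) = HB.snd.Δ := by
  rw [phi_conv, conv_assoc (hs_coassoc HB.snd), rho_rhoT_right HB hcomm]
  exact conv_one_left (hs_counitL HB.snd) _

lemma phi_counitR (hcomm : ∀ x y : A, x * y = y * x) : (ERc HB.snd.ε).comp
    (φmap k A HB.fst.Δ HB.snd.Δ HB.fst.S HB.snd.S) = LinearMap.id := by
  rw [phi_conv, comp_conv (isAlg_ERc (hs_isAlg_counit HB.snd))]
  rw [← LinearMap.comp_assoc, rho_counitR HB hcomm, ERc_comul' HB]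
  have : (cunit HB.snd.ε : A →ₗ[k] A).comp HB.snd.S
      = cunit (HB.snd.ε.comp HB.snd.S) := by
    unfold cunit; rw [LinearMap.comp_assoc]
  rw [this, hs_counit_S HB.snd]
  exact conv_one_left (hs_counitL HB.snd) _

lemma phi_counitL : (ELc HB.snd.ε).comp
    (φmap k A HB.fst.Δ HB.snd.Δ HB.fst.S HB.snd.S) = cunit HB.snd.ε := by
  rw [phi_conv, comp_conv (isAlg_ELc (hs_isAlg_counit HB.snd))]
  rw [← LinearMap.comp_assoc, rho_counitL HB, LinearMap.id_comp, ELc_comul' HB]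
  exact hs_antiL HB.snd

end RhoPhi

section CoassocRho

set_option maxHeartbeats 2000000
set_option synthInstance.maxHeartbeats 400000

variable {k : Type*} [Field k] {A : Type*} [Ring A] [Algebra k A]
variable (HB : HopfBrace k A)

lemma assoc_flip (z : A) (X : A ⊗[k] A) :
    (TensorProduct.assoc k A A A) (X ⊗ₜ z)
      = (TensorProduct.map (LinearMap.id : A →ₗ[k] A) ((TensorProduct.mk k A A).flip z))
          X := by
  induction X using TensorProduct.induction_on with
  | zero => simp
  | tmul x y => simp [TensorProduct.mk_apply]
  | add u v hu hv => rw [TensorProduct.add_tmul, map_add, map_add, hu, hv]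

lemma isAlg_Dhalf : IsAlgebraMorphism k A (A ⊗[k] (A ⊗[k] A)) (Dhalf HB) :=
  isAlg_comp (isAlg_map isAlg_id isAlg_i1) (hs_isAlg_comul HB.snd)

/-- the inner part of `ρ` : `v ⊗ w ↦ (S v ⊗ 1) Δ'(w)`. -/
def rhoBody : A ⊗[k] A →ₗ[k] A ⊗[k] A :=
  (LinearMap.mul' k (A ⊗[k] A)).comp
    (TensorProduct.map ((ι₁ k A A).comp HB.fst.S) HB.snd.Δ)

lemma rho_eq_body : ρmap k A HB.fst.Δ HB.snd.Δ HB.fst.S = (rhoBody HB).comp HB.fst.Δ := by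
  unfold ρmap rhoBody
  rw [LinearMap.comp_assoc]

lemma isAlg_rhoBody (hcomm : ∀ x y : A, x * y = y * x) :
    IsAlgebraMorphism k (A ⊗[k] A) (A ⊗[k] A) (rhoBody HB) :=
  isAlg_mulmap (tensor_comm_of_comm hcomm hcomm)
    (isAlg_comp isAlg_i1 (hs_isAlg_S HB.fst hcomm)) (hs_isAlg_comul HB.snd)

lemma rhoBody_i1 : (rhoBody HB).comp (ι₁ k A A) = (ι₁ k A A).comp HB.fst.S := by
  apply LinearMap.ext; intro v
  simp only [rhoBody, LinearMap.comp_apply, hb_i1_apply, TensorProduct.map_tmul,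
    LinearMap.mul'_apply, HB.snd.comul_one]
  rw [mul_one]

lemma rhoBody_i2 : (rhoBody HB).comp (ι₂ k A A) = HB.snd.Δ := by
  apply LinearMap.ext; intro w
  simp only [rhoBody, LinearMap.comp_apply, hb_i2_apply, TensorProduct.map_tmul,
    LinearMap.mul'_apply, hs_S_one HB.fst, hb_i1_apply]
  rw [show ((1 : A) ⊗ₜ[k] (1 : A)) = (1 : A ⊗[k] A) from
    (Algebra.TensorProduct.one_def).symm, one_mul]

lemma rhoBody_one : rhoBody HB 1 = 1 := by
  have := LinearMap.congr_fun (rhoBody_i1 HB) 1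
  simpa [hb_i1_apply, hs_S_one HB.fst, Algebra.TensorProduct.one_def] using this

/-- the LHS of (P1a): `(id ⊗ ρ) ∘ ρ` as a threefold convolution. -/
lemma lhs_P1a (hcomm : ∀ x y : A, x * y = y * x) :
    (TensorProduct.map (LinearMap.id : A →ₗ[k] A)
        (ρmap k A HB.fst.Δ HB.snd.Δ HB.fst.S)).comp
      (ρmap k A HB.fst.Δ HB.snd.Δ HB.fst.S)
    = conv HB.fst.Δ (I11S HB)
        (conv HB.fst.Δ (Psi1 HB) (conv HB.fst.Δ (I11S HB) (D3 HB))) := by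
  have hAlgmap : IsAlgebraMorphism k (A ⊗[k] A) (A ⊗[k] (A ⊗[k] A))
      (TensorProduct.map (LinearMap.id : A →ₗ[k] A)
        (ρmap k A HB.fst.Δ HB.snd.Δ HB.fst.S)) :=
    isAlg_map isAlg_id (isAlg_rho HB hcomm)
  nth_rewrite 2 [rho_conv HB]
  rw [comp_conv hAlgmap]
  -- first factor
  have f1 : (TensorProduct.map (LinearMap.id : A →ₗ[k] A)
        (ρmap k A HB.fst.Δ HB.snd.Δ HB.fst.S)).comp ((ι₁ k A A).comp HB.fst.S)
      = I11S HB := by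
    apply LinearMap.ext; intro x
    simp only [LinearMap.comp_apply, hb_i1_apply, TensorProduct.map_tmul,
      LinearMap.id_apply, I11S, (isAlg_rho HB hcomm).2]
  rw [f1]
  congr 1
  -- second factor : (id ⊗ ρ) ∘ Δ'
  have key : (TensorProduct.map (LinearMap.id : A →ₗ[k] A)
        (ρmap k A HB.fst.Δ HB.snd.Δ HB.fst.S)).comp HB.snd.Δ
      = (TensorProduct.map (LinearMap.id : A →ₗ[k] A) (rhoBody HB)).comp
          ((TensorProduct.map (LinearMap.id : A →ₗ[k] A) HB.fst.Δ).comp HB.snd.Δ) := by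
    rw [rho_eq_body, ← LinearMap.comp_assoc, ← TensorProduct.map_comp,
      LinearMap.comp_id]
  rw [key, compat_conv HB]
  have hP : IsAlgebraMorphism k (A ⊗[k] (A ⊗[k] A)) (A ⊗[k] (A ⊗[k] A))
      (TensorProduct.map (LinearMap.id : A →ₗ[k] A) (rhoBody HB)) :=
    isAlg_map isAlg_id (isAlg_rhoBody HB hcomm)
  rw [comp_conv hP, comp_conv hP]
  -- P ∘ Dhalf = Psi1
  have p1 : (TensorProduct.map (LinearMap.id : A →ₗ[k] A) (rhoBody HB)).comp
      (Dhalf HB) = Psi1 HB := by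
    unfold Dhalf Psi1
    rw [← LinearMap.comp_assoc, ← TensorProduct.map_comp, LinearMap.comp_id,
      rhoBody_i1 HB]
  -- P ∘ I11S = I11S
  have p2 : (TensorProduct.map (LinearMap.id : A →ₗ[k] A) (rhoBody HB)).comp
      (I11S HB) = I11S HB := by
    apply LinearMap.ext; intro x
    simp only [I11S, LinearMap.comp_apply, hb_i1_apply, TensorProduct.map_tmul,
      LinearMap.id_apply, rhoBody_one HB]
  -- P ∘ Kp = D3
  have p3 : (TensorProduct.map (LinearMap.id : A →ₗ[k] A) (rhoBody HB)).comp
      (Kp HB) = D3 HB := by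
    unfold Kp D3
    rw [← LinearMap.comp_assoc, ← TensorProduct.map_comp, LinearMap.comp_id,
      rhoBody_i2 HB]
  rw [p1, p2, p3]

/-- inner part of the `C`-contraction: `v ⊗ w ↦ (v S(w)) ⊗ 1`. -/
def cInner : A ⊗[k] A →ₗ[k] A ⊗[k] A :=
  (ι₁ k A A).comp ((LinearMap.mul' k A).comp
    (TensorProduct.map (LinearMap.id : A →ₗ[k] A) HB.fst.S))

lemma cInner_apply (v w : A) : cInner HB (v ⊗ₜ w) = (v * HB.fst.S w) ⊗ₜ (1 : A) := by
  simp [cInner, hb_i1_apply]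

lemma isAlg_cInner (hcomm : ∀ x y : A, x * y = y * x) :
    IsAlgebraMorphism k (A ⊗[k] A) (A ⊗[k] A) (cInner HB) :=
  isAlg_comp isAlg_i1 (isAlg_mulmap hcomm isAlg_id (hs_isAlg_S HB.fst hcomm))

lemma cInner_i1 : (cInner HB).comp (ι₁ k A A) = ι₁ k A A := by
  apply LinearMap.ext; intro v
  simp [cInner_apply, hb_i1_apply, hs_S_one HB.fst]

lemma cInner_i2 : (cInner HB).comp (ι₂ k A A) = (ι₁ k A A).comp HB.fst.S := by
  apply LinearMap.ext; intro w
  simp [cInner_apply, hb_i2_apply, hb_i1_apply]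

lemma cInner_one : cInner HB 1 = 1 := by
  have := LinearMap.congr_fun (cInner_i1 HB) 1
  simpa [hb_i1_apply, Algebra.TensorProduct.one_def] using this

/-- `C ∘ braceLHS = ι₁` : the `(★)`-collapse. -/
lemma cmap_braceLHS (hcomm : ∀ x y : A, x * y = y * x) :
    (TensorProduct.map (LinearMap.id : A →ₗ[k] A) (cInner HB)).comp
        ((TensorProduct.map (LinearMap.id : A →ₗ[k] A) HB.fst.Δ).comp HB.snd.Δ)
      = ι₁ k A (A ⊗[k] A) := by
  have h1 : (TensorProduct.map (LinearMap.id : A →ₗ[k] A) (cInner HB)).comp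
      (TensorProduct.map (LinearMap.id : A →ₗ[k] A) HB.fst.Δ)
      = TensorProduct.map (LinearMap.id : A →ₗ[k] A) ((cInner HB).comp HB.fst.Δ) := by
    rw [← TensorProduct.map_comp, LinearMap.comp_id]
  have h2 : (cInner HB).comp HB.fst.Δ = (ι₁ k A A).comp (cunit HB.fst.ε) := by
    unfold cInner
    rw [LinearMap.comp_assoc, LinearMap.comp_assoc, hs_antiR HB.fst]
  rw [← LinearMap.comp_assoc, h1, h2]
  -- now : (map id (ι₁ ∘ cunit ε)) ∘ Δ' = ι₁
  apply LinearMap.ext; intro a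
  simp only [LinearMap.comp_apply, hb_i1_apply]
  have h3 : TensorProduct.map (LinearMap.id : A →ₗ[k] A)
      ((ι₁ k A A).comp (cunit HB.fst.ε))
      = (TensorProduct.map (LinearMap.id : A →ₗ[k] A) (ι₁ k A A)).comp
          ((TensorProduct.map (LinearMap.id : A →ₗ[k] A) (Algebra.linearMap k A)).comp
            (TensorProduct.map (LinearMap.id : A →ₗ[k] A) HB.fst.ε)) := by
    rw [← TensorProduct.map_comp, ← TensorProduct.map_comp]
    simp only [LinearMap.comp_id]
    rfl
  rw [h3]
  simp only [LinearMap.comp_apply]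
  rw [← counit_eq HB hcomm, hs_counit_inv_right HB.snd a,
    TensorProduct.rid_symm_apply]
  simp [Algebra.TensorProduct.one_def, hb_i1_apply]

end CoassocRho

section CoassocRho2

set_option maxHeartbeats 2000000
set_option synthInstance.maxHeartbeats 400000

variable {k : Type*} [Field k] {A : Type*} [Ring A] [Algebra k A]
variable (HB : HopfBrace k A)

lemma cmap_Dhalf : (TensorProduct.map (LinearMap.id : A →ₗ[k] A) (cInner HB)).comp
    (Dhalf HB) = Dhalf HB := by
  unfold Dhalf
  rw [← LinearMap.comp_assoc, ← TensorProduct.map_comp, LinearMap.comp_id,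
    cInner_i1 HB]

lemma cmap_Kp : (TensorProduct.map (LinearMap.id : A →ₗ[k] A) (cInner HB)).comp
    (Kp HB) = Psi1 HB := by
  unfold Kp Psi1
  rw [← LinearMap.comp_assoc, ← TensorProduct.map_comp, LinearMap.comp_id,
    cInner_i2 HB]

lemma cmap_I11S : (TensorProduct.map (LinearMap.id : A →ₗ[k] A) (cInner HB)).comp
    (I11S HB) = I11S HB := by
  apply LinearMap.ext; intro x
  simp only [I11S, LinearMap.comp_apply, hb_i1_apply, TensorProduct.map_tmul,
    LinearMap.id_apply, cInner_one HB]

lemma conv_collapse (hcomm : ∀ x y : A, x * y = y * x) :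
    conv HB.fst.Δ (Dhalf HB) (conv HB.fst.Δ (I11S HB) (Psi1 HB))
      = ι₁ k A (A ⊗[k] A) := by
  have hC : IsAlgebraMorphism k (A ⊗[k] (A ⊗[k] A)) (A ⊗[k] (A ⊗[k] A))
      (TensorProduct.map (LinearMap.id : A →ₗ[k] A) (cInner HB)) :=
    isAlg_map isAlg_id (isAlg_cInner HB hcomm)
  have e0 : conv HB.fst.Δ (Dhalf HB) (conv HB.fst.Δ (I11S HB) (Psi1 HB))
      = (TensorProduct.map (LinearMap.id : A →ₗ[k] A) (cInner HB)).comp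
          (conv HB.fst.Δ (Dhalf HB) (conv HB.fst.Δ (I11S HB) (Kp HB))) := by
    rw [comp_conv hC, comp_conv hC, cmap_Dhalf HB, cmap_I11S HB, cmap_Kp HB]
  rw [e0, ← compat_conv HB]
  exact cmap_braceLHS HB hcomm

/-- The key structure lemma `Δ'∘S = (ι₁S) ⋆ ((id⊗S)Δ') ⋆ (ι₁S)`, in embedded form. -/
lemma DhalfS (hcomm : ∀ x y : A, x * y = y * x) :
    (Dhalf HB).comp HB.fst.S
      = conv HB.fst.Δ (I11S HB) (conv HB.fst.Δ (Psi1 HB) (I11S HB)) := by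
  have u1 : conv HB.fst.Δ ((Dhalf HB).comp HB.fst.S) (Dhalf HB)
      = cunit HB.fst.ε := hs_conv_inv_left HB.fst (isAlg_Dhalf HB)
  have u2 : conv HB.fst.Δ (Dhalf HB)
      (conv HB.fst.Δ (I11S HB) (conv HB.fst.Δ (Psi1 HB) (I11S HB)))
      = cunit HB.fst.ε := by
    rw [conv_assoc (hs_coassoc HB.fst) (I11S HB) (Psi1 HB) (I11S HB)]
    rw [conv_assoc (hs_coassoc HB.fst) (Dhalf HB) _ (I11S HB)]
    rw [conv_collapse HB hcomm]
    have : I11S HB = (ι₁ k A (A ⊗[k] A)).comp HB.fst.S := rfl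
    rw [this]
    exact hs_conv_inv_right HB.fst isAlg_i1
  exact conv_unique (hs_coassoc HB.fst) (hs_counitL HB.fst) (hs_counitR HB.fst) u1 u2

/-- Lemma 2.5 : coassociativity of the coaction `ρ` (map form). -/
lemma coassoc_rho (hcomm : ∀ x y : A, x * y = y * x) :
    (TensorProduct.map (LinearMap.id : A →ₗ[k] A)
        (ρmap k A HB.fst.Δ HB.snd.Δ HB.fst.S)).comp
      (ρmap k A HB.fst.Δ HB.snd.Δ HB.fst.S)
    = (TensorProduct.assoc k A A A).toLinearMap.comp
        ((TensorProduct.map HB.snd.Δ (LinearMap.id : A →ₗ[k] A)).comp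
          (ρmap k A HB.fst.Δ HB.snd.Δ HB.fst.S)) := by
  have hΘ : IsAlgebraMorphism k (A ⊗[k] A) (A ⊗[k] (A ⊗[k] A))
      ((TensorProduct.assoc k A A A).toLinearMap.comp
        (TensorProduct.map HB.snd.Δ (LinearMap.id : A →ₗ[k] A))) :=
    isAlg_comp isAlg_assoc (isAlg_map (hs_isAlg_comul HB.snd) isAlg_id)
  have hre : (TensorProduct.assoc k A A A).toLinearMap.comp
      ((TensorProduct.map HB.snd.Δ (LinearMap.id : A →ₗ[k] A)).comp
        (ρmap k A HB.fst.Δ HB.snd.Δ HB.fst.S))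
      = ((TensorProduct.assoc k A A A).toLinearMap.comp
          (TensorProduct.map HB.snd.Δ (LinearMap.id : A →ₗ[k] A))).comp
        (ρmap k A HB.fst.Δ HB.snd.Δ HB.fst.S) := by
    rw [LinearMap.comp_assoc]
  rw [hre, lhs_P1a HB hcomm, rho_conv HB, comp_conv hΘ]
  -- Θ ∘ (ι₁ ∘ S) = Dhalf ∘ S
  have t1 : ((TensorProduct.assoc k A A A).toLinearMap.comp
      (TensorProduct.map HB.snd.Δ (LinearMap.id : A →ₗ[k] A))).comp (ι₁ k A A)
      = Dhalf HB := by
    apply LinearMap.ext; intro x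
    simp only [LinearMap.comp_apply, hb_i1_apply, TensorProduct.map_tmul,
      LinearMap.id_apply, LinearEquiv.coe_coe]
    rw [assoc_flip]
    rfl
  have t1' : ((TensorProduct.assoc k A A A).toLinearMap.comp
      (TensorProduct.map HB.snd.Δ (LinearMap.id : A →ₗ[k] A))).comp
        ((ι₁ k A A).comp HB.fst.S)
      = (Dhalf HB).comp HB.fst.S := by
    rw [← LinearMap.comp_assoc, t1]
  -- Θ ∘ Δ' = D3
  have t2 : ((TensorProduct.assoc k A A A).toLinearMap.comp
      (TensorProduct.map HB.snd.Δ (LinearMap.id : A →ₗ[k] A))).comp HB.snd.Δ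
      = D3 HB := by
    rw [LinearMap.comp_assoc]
    exact (hs_coassoc HB.snd).symm
  rw [t1', t2, DhalfS HB hcomm]
  rw [← conv_assoc (hs_coassoc HB.fst) (I11S HB) _ (D3 HB)]
  rw [← conv_assoc (hs_coassoc HB.fst) (Psi1 HB) (I11S HB) (D3 HB)]

end CoassocRho2

section CoreHM2

set_option maxHeartbeats 2000000
set_option synthInstance.maxHeartbeats 400000

variable {k : Type*} [Field k] {A : Type*} [Ring A] [Algebra k A]
variable (HB : HopfBrace k A)

lemma gamma_apply (c d : A) :
    γmap k A (ρmap k A HB.fst.Δ HB.snd.Δ HB.fst.S) (c ⊗ₜ d)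
      = (c ⊗ₜ (1 : A)) * (ρmap k A HB.fst.Δ HB.snd.Δ HB.fst.S d) := by
  simp [γmap, hb_i1_apply]

lemma isAlg_gamma (hcomm : ∀ x y : A, x * y = y * x) :
    IsAlgebraMorphism k (A ⊗[k] A) (A ⊗[k] A)
      (γmap k A (ρmap k A HB.fst.Δ HB.snd.Δ HB.fst.S)) :=
  isAlg_mulmap (tensor_comm_of_comm hcomm hcomm) isAlg_i1 (isAlg_rho HB hcomm)

lemma gamma_comul (hcomm : ∀ x y : A, x * y = y * x) :
    (γmap k A (ρmap k A HB.fst.Δ HB.snd.Δ HB.fst.S)).comp HB.fst.Δ = HB.snd.Δ := by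
  have h0 : (γmap k A (ρmap k A HB.fst.Δ HB.snd.Δ HB.fst.S)).comp HB.fst.Δ
      = conv HB.fst.Δ (ι₁ k A A) (ρmap k A HB.fst.Δ HB.snd.Δ HB.fst.S) := by
    unfold γmap conv
    rw [LinearMap.comp_assoc]
  rw [h0, rho_conv HB, conv_assoc (hs_coassoc HB.fst),
    hs_conv_inv_right HB.fst isAlg_i1]
  exact conv_one_left (hs_counitL HB.fst) _

lemma gamma_i1 (hcomm : ∀ x y : A, x * y = y * x) :
    (γmap k A (ρmap k A HB.fst.Δ HB.snd.Δ HB.fst.S)).comp (ι₁ k A A) = ι₁ k A A := by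
  apply LinearMap.ext; intro x
  simp only [LinearMap.comp_apply, hb_i1_apply, gamma_apply HB,
    (isAlg_rho HB hcomm).2, mul_one]

lemma gamma_i2 : (γmap k A (ρmap k A HB.fst.Δ HB.snd.Δ HB.fst.S)).comp (ι₂ k A A)
    = ρmap k A HB.fst.Δ HB.snd.Δ HB.fst.S := by
  apply LinearMap.ext; intro x
  simp only [LinearMap.comp_apply, hb_i2_apply, gamma_apply HB]
  rw [show ((1 : A) ⊗ₜ[k] (1 : A)) = (1 : A ⊗[k] A) from
    (Algebra.TensorProduct.one_def).symm, one_mul]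

/-- `(id ⊗ Δ) ∘ ρ` as a convolution : reformulation of the compatibility. -/
lemma E4 (hcomm : ∀ x y : A, x * y = y * x) :
    (TensorProduct.map (LinearMap.id : A →ₗ[k] A) HB.fst.Δ).comp
        (ρmap k A HB.fst.Δ HB.snd.Δ HB.fst.S)
      = conv HB.fst.Δ
          ((TensorProduct.map (LinearMap.id : A →ₗ[k] A) (ι₁ k A A)).comp
            (ρmap k A HB.fst.Δ HB.snd.Δ HB.fst.S))
          ((TensorProduct.map (LinearMap.id : A →ₗ[k] A) (ι₂ k A A)).comp
            (ρmap k A HB.fst.Δ HB.snd.Δ HB.fst.S)) := by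
  have hD : IsAlgebraMorphism k (A ⊗[k] A) (A ⊗[k] (A ⊗[k] A))
      (TensorProduct.map (LinearMap.id : A →ₗ[k] A) HB.fst.Δ) :=
    isAlg_map isAlg_id (hs_isAlg_comul HB.fst)
  have h12 : IsAlgebraMorphism k (A ⊗[k] A) (A ⊗[k] (A ⊗[k] A))
      (TensorProduct.map (LinearMap.id : A →ₗ[k] A) (ι₁ k A A)) :=
    isAlg_map isAlg_id isAlg_i1
  have h13 : IsAlgebraMorphism k (A ⊗[k] A) (A ⊗[k] (A ⊗[k] A))
      (TensorProduct.map (LinearMap.id : A →ₗ[k] A) (ι₂ k A A)) :=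
    isAlg_map isAlg_id isAlg_i2
  rw [rho_conv HB, comp_conv hD, comp_conv h12, comp_conv h13]
  have q1 : (TensorProduct.map (LinearMap.id : A →ₗ[k] A) HB.fst.Δ).comp
      ((ι₁ k A A).comp HB.fst.S) = I11S HB := by
    apply LinearMap.ext; intro x
    simp only [LinearMap.comp_apply, hb_i1_apply, TensorProduct.map_tmul,
      LinearMap.id_apply, HB.fst.comul_one, I11S]
  have q2 : (TensorProduct.map (LinearMap.id : A →ₗ[k] A) (ι₁ k A A)).comp
      ((ι₁ k A A).comp HB.fst.S) = I11S HB := by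
    apply LinearMap.ext; intro x
    simp only [LinearMap.comp_apply, hb_i1_apply, TensorProduct.map_tmul,
      LinearMap.id_apply, I11S]
    rw [Algebra.TensorProduct.one_def]
  have q3 : (TensorProduct.map (LinearMap.id : A →ₗ[k] A) (ι₂ k A A)).comp
      ((ι₁ k A A).comp HB.fst.S) = I11S HB := by
    apply LinearMap.ext; intro x
    simp only [LinearMap.comp_apply, hb_i1_apply, hb_i2_apply, TensorProduct.map_tmul,
      LinearMap.id_apply, I11S]
    rw [Algebra.TensorProduct.one_def]
  have q4 : (TensorProduct.map (LinearMap.id : A →ₗ[k] A) HB.fst.Δ).comp HB.snd.Δ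
      = conv HB.fst.Δ (Dhalf HB) (conv HB.fst.Δ (I11S HB) (Kp HB)) := compat_conv HB
  have q5 : (TensorProduct.map (LinearMap.id : A →ₗ[k] A) (ι₁ k A A)).comp HB.snd.Δ
      = Dhalf HB := rfl
  have q6 : (TensorProduct.map (LinearMap.id : A →ₗ[k] A) (ι₂ k A A)).comp HB.snd.Δ
      = Kp HB := rfl
  rw [q1, q2, q3, q4, q5, q6]
  rw [conv_assoc (hs_coassoc HB.fst) (I11S HB) (Dhalf HB)
    (conv HB.fst.Δ (I11S HB) (Kp HB))]

/-- `⋆'`-convolution of algebra maps rewritten as `⋆`-convolution. -/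
lemma conv_snd_to_fst (hcomm : ∀ x y : A, x * y = y * x)
    {B : Type*} [Ring B] [Algebra k B] (hcommB : ∀ x y : B, x * y = y * x)
    {f g : A →ₗ[k] B} (hf : IsAlgebraMorphism k A B f) (hg : IsAlgebraMorphism k A B g) :
    conv HB.snd.Δ f g
      = conv HB.fst.Δ f
          ((LinearMap.mul' k B).comp ((TensorProduct.map f g).comp
            (ρmap k A HB.fst.Δ HB.snd.Δ HB.fst.S))) := by
  have hh := isAlg_mulmap hcommB hf hg
  apply LinearMap.ext; intro a
  rw [conv_apply, conv_apply]
  have h1 := LinearMap.congr_fun (gamma_comul HB hcomm) a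
  simp only [LinearMap.comp_apply] at h1
  rw [← h1]
  have h2 : ((LinearMap.mul' k B).comp (TensorProduct.map f g)).comp
        (γmap k A (ρmap k A HB.fst.Δ HB.snd.Δ HB.fst.S))
      = (LinearMap.mul' k B).comp
          (TensorProduct.map f
            (((LinearMap.mul' k B).comp (TensorProduct.map f g)).comp
              (ρmap k A HB.fst.Δ HB.snd.Δ HB.fst.S))) := by
    apply TensorProduct.ext'; intro c d
    simp only [LinearMap.comp_apply, gamma_apply HB, TensorProduct.map_tmul]
    have h3 := hh.1 (c ⊗ₜ[k] (1 : A)) (ρmap k A HB.fst.Δ HB.snd.Δ HB.fst.S d)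
    simp only [LinearMap.comp_apply] at h3
    rw [h3]
    simp only [TensorProduct.map_tmul, LinearMap.mul'_apply, hg.2, mul_one]
  have h4 := LinearMap.congr_fun h2 (HB.fst.Δ a)
  simp only [LinearMap.comp_apply] at h4
  rw [h4]
  rfl

/-- auxiliary: `assoc ∘ (φ ⊗ id)` collapses against a flipped `mk`. -/
lemma Phi_mk (q : A) :
    ((TensorProduct.assoc k A A A).toLinearMap.comp
        (TensorProduct.map (φmap k A HB.fst.Δ HB.snd.Δ HB.fst.S HB.snd.S)
          (LinearMap.id : A →ₗ[k] A))).comp ((TensorProduct.mk k A A).flip q)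
      = (TensorProduct.map (LinearMap.id : A →ₗ[k] A)
          ((TensorProduct.mk k A A).flip q)).comp
        (φmap k A HB.fst.Δ HB.snd.Δ HB.fst.S HB.snd.S) := by
  apply LinearMap.ext; intro v
  simp only [LinearMap.comp_apply, TensorProduct.mk_apply, LinearMap.flip_apply,
    TensorProduct.map_tmul, LinearMap.id_apply, LinearEquiv.coe_coe]
  rw [assoc_flip]

lemma mul_i12_mk (q : A) :
    (LinearMap.mul' k (A ⊗[k] (A ⊗[k] A))).comp
        (TensorProduct.map
          (TensorProduct.map (LinearMap.id : A →ₗ[k] A) (ι₁ k A A))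
          (TensorProduct.map (LinearMap.id : A →ₗ[k] A)
            ((TensorProduct.mk k A A).flip q)))
      = (TensorProduct.map (LinearMap.id : A →ₗ[k] A)
          ((TensorProduct.mk k A A).flip q)).comp (LinearMap.mul' k (A ⊗[k] A)) := by
  apply TensorProduct.ext_fourfold'
  intro w x y z
  simp only [LinearMap.comp_apply, TensorProduct.map_tmul, LinearMap.id_apply,
    hb_i1_apply, TensorProduct.mk_apply, LinearMap.flip_apply, LinearMap.mul'_apply,
    Algebra.TensorProduct.tmul_mul_tmul, one_mul]

/-- Proposition (HM2), map form. -/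
lemma core_HM2 (hcomm : ∀ x y : A, x * y = y * x) :
    (TensorProduct.map (LinearMap.id : A →ₗ[k] A) HB.snd.Δ).comp
        (ρmap k A HB.fst.Δ HB.snd.Δ HB.fst.S)
      = conv HB.snd.Δ
          ((TensorProduct.map (LinearMap.id : A →ₗ[k] A) (ι₁ k A A)).comp
            (ρmap k A HB.fst.Δ HB.snd.Δ HB.fst.S))
          (((TensorProduct.assoc k A A A).toLinearMap.comp
            (TensorProduct.map (φmap k A HB.fst.Δ HB.snd.Δ HB.fst.S HB.snd.S)
              (LinearMap.id : A →ₗ[k] A))).comp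
            (ρmap k A HB.fst.Δ HB.snd.Δ HB.fst.S)) := by
  set ρ0 := ρmap k A HB.fst.Δ HB.snd.Δ HB.fst.S with hρ0
  set φ0 := φmap k A HB.fst.Δ HB.snd.Δ HB.fst.S HB.snd.S with hφ0
  set Φ := (TensorProduct.assoc k A A A).toLinearMap.comp
    (TensorProduct.map φ0 (LinearMap.id : A →ₗ[k] A)) with hΦ
  have hcT : ∀ x y : A ⊗[k] A, x * y = y * x := tensor_comm_of_comm hcomm hcomm
  have hcT3 : ∀ x y : A ⊗[k] (A ⊗[k] A), x * y = y * x :=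
    tensor_comm_of_comm hcomm hcT
  have hi12ρ : IsAlgebraMorphism k A (A ⊗[k] (A ⊗[k] A))
      ((TensorProduct.map (LinearMap.id : A →ₗ[k] A) (ι₁ k A A)).comp ρ0) :=
    isAlg_comp (isAlg_map isAlg_id isAlg_i1) (isAlg_rho HB hcomm)
  have hΦρ : IsAlgebraMorphism k A (A ⊗[k] (A ⊗[k] A)) (Φ.comp ρ0) :=
    isAlg_comp (isAlg_comp isAlg_assoc
      (isAlg_map (isAlg_phi HB hcomm) isAlg_id)) (isAlg_rho HB hcomm)
  -- RHS → ⋆-convolution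
  rw [conv_snd_to_fst HB hcomm hcT3 hi12ρ hΦρ]
  -- LHS → ⋆-convolution
  have lhs1 : (TensorProduct.map (LinearMap.id : A →ₗ[k] A) HB.snd.Δ).comp ρ0
      = (TensorProduct.map (LinearMap.id : A →ₗ[k] A)
          (γmap k A ρ0)).comp
        ((TensorProduct.map (LinearMap.id : A →ₗ[k] A) HB.fst.Δ).comp ρ0) := by
    rw [← LinearMap.comp_assoc, ← TensorProduct.map_comp, LinearMap.comp_id,
      gamma_comul HB hcomm]
  have hγm : IsAlgebraMorphism k (A ⊗[k] (A ⊗[k] A)) (A ⊗[k] (A ⊗[k] A))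
      (TensorProduct.map (LinearMap.id : A →ₗ[k] A) (γmap k A ρ0)) :=
    isAlg_map isAlg_id (isAlg_gamma HB hcomm)
  rw [lhs1, E4 HB hcomm, comp_conv hγm]
  have l2 : (TensorProduct.map (LinearMap.id : A →ₗ[k] A) (γmap k A ρ0)).comp
      ((TensorProduct.map (LinearMap.id : A →ₗ[k] A) (ι₁ k A A)).comp ρ0)
      = (TensorProduct.map (LinearMap.id : A →ₗ[k] A) (ι₁ k A A)).comp ρ0 := by
    rw [← LinearMap.comp_assoc, ← TensorProduct.map_comp, LinearMap.comp_id,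
      gamma_i1 HB hcomm]
  have l3 : (TensorProduct.map (LinearMap.id : A →ₗ[k] A) (γmap k A ρ0)).comp
      ((TensorProduct.map (LinearMap.id : A →ₗ[k] A) (ι₂ k A A)).comp ρ0)
      = (TensorProduct.map (LinearMap.id : A →ₗ[k] A) ρ0).comp ρ0 := by
    rw [← LinearMap.comp_assoc, ← TensorProduct.map_comp, LinearMap.comp_id,
      gamma_i2 HB]
  rw [l2, l3]
  congr 1
  -- remaining : (id ⊗ ρ) ∘ ρ = mul ∘ (map (i12 ρ) (Φ ρ)) ∘ ρ
  have m1 : TensorProduct.map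
      ((TensorProduct.map (LinearMap.id : A →ₗ[k] A) (ι₁ k A A)).comp ρ0) (Φ.comp ρ0)
      = (TensorProduct.map
          ((TensorProduct.map (LinearMap.id : A →ₗ[k] A) (ι₁ k A A)).comp ρ0) Φ).comp
        (TensorProduct.map LinearMap.id ρ0) := by
    rw [← TensorProduct.map_comp, LinearMap.comp_id]
  have m2 : (TensorProduct.map (LinearMap.id : A →ₗ[k] A) ρ0).comp ρ0
      = (TensorProduct.assoc k A A A).toLinearMap.comp
          ((TensorProduct.map HB.snd.Δ (LinearMap.id : A →ₗ[k] A)).comp ρ0) :=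
    coassoc_rho HB hcomm
  have key : (LinearMap.mul' k (A ⊗[k] (A ⊗[k] A))).comp
      ((TensorProduct.map
          ((TensorProduct.map (LinearMap.id : A →ₗ[k] A) (ι₁ k A A)).comp ρ0) Φ).comp
        ((TensorProduct.assoc k A A A).toLinearMap.comp
          (TensorProduct.map HB.snd.Δ (LinearMap.id : A →ₗ[k] A))))
      = (TensorProduct.assoc k A A A).toLinearMap.comp
          (TensorProduct.map HB.snd.Δ (LinearMap.id : A →ₗ[k] A)) := by
    apply TensorProduct.ext'; intro c q
    simp only [LinearMap.comp_apply, TensorProduct.map_tmul, LinearMap.id_apply,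
      LinearEquiv.coe_coe]
    rw [assoc_flip]
    have n1 : (TensorProduct.map
        ((TensorProduct.map (LinearMap.id : A →ₗ[k] A) (ι₁ k A A)).comp ρ0) Φ).comp
          (TensorProduct.map (LinearMap.id : A →ₗ[k] A)
            ((TensorProduct.mk k A A).flip q))
        = (TensorProduct.map
            (TensorProduct.map (LinearMap.id : A →ₗ[k] A) (ι₁ k A A))
            (TensorProduct.map (LinearMap.id : A →ₗ[k] A)
              ((TensorProduct.mk k A A).flip q))).comp
          (TensorProduct.map ρ0 φ0) := by
      apply TensorProduct.ext'; intro v w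
      simp only [LinearMap.comp_apply, TensorProduct.map_tmul, LinearMap.id_apply]
      congr 1
      have := LinearMap.congr_fun (Phi_mk HB q) w
      simp only [LinearMap.comp_apply, TensorProduct.mk_apply,
        LinearMap.flip_apply] at this
      exact this
    have n2 := LinearMap.congr_fun n1 (HB.snd.Δ c)
    simp only [LinearMap.comp_apply] at n2
    rw [n2]
    have n3 := LinearMap.congr_fun (mul_i12_mk (k := k) (A := A) q)
      ((TensorProduct.map ρ0 φ0) (HB.snd.Δ c))
    simp only [LinearMap.comp_apply] at n3
    rw [n3]
    have n4 : (LinearMap.mul' k (A ⊗[k] A)) ((TensorProduct.map ρ0 φ0) (HB.snd.Δ c))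
        = HB.snd.Δ c := by
      have := LinearMap.congr_fun (rho_phi HB hcomm) c
      simpa [conv_apply] using this
    rw [n4]
  -- pointwise conclusion
  apply LinearMap.ext; intro a
  have k1 := LinearMap.congr_fun m1 (ρ0 a)
  have k2 := LinearMap.congr_fun m2 a
  have k3 := LinearMap.congr_fun key (ρ0 a)
  simp only [LinearMap.comp_apply] at k1 k2 k3 ⊢
  rw [k2, k1, k2, k3]

end CoreHM2

section P3aHM3

set_option maxHeartbeats 2000000
set_option synthInstance.maxHeartbeats 400000

variable {k : Type*} [Field k] {A : Type*} [Ring A] [Algebra k A]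
variable (HB : HopfBrace k A)

lemma comul'_as_conv : HB.snd.Δ = conv HB.snd.Δ (ι₁ k A A) (ι₂ k A A) := by
  have h : (LinearMap.mul' k (A ⊗[k] A)).comp
      (TensorProduct.map (ι₁ k A A) (ι₂ k A A)) = LinearMap.id := by
    apply TensorProduct.ext'; intro x y
    simp [hb_i1_apply, hb_i2_apply, Algebra.TensorProduct.tmul_mul_tmul]
  unfold conv
  rw [← LinearMap.comp_assoc, h, LinearMap.id_comp]

/-- the antipode `T` is an anti-coalgebra morphism for `Δ'`. -/
lemma anticoT (hcomm : ∀ x y : A, x * y = y * x) :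
    HB.snd.Δ.comp HB.snd.S
      = (TensorProduct.comm k A A).toLinearMap.comp
          ((TensorProduct.map HB.snd.S HB.snd.S).comp HB.snd.Δ) := by
  have hG : (TensorProduct.comm k A A).toLinearMap.comp
      ((TensorProduct.map HB.snd.S HB.snd.S).comp HB.snd.Δ)
      = conv HB.snd.Δ ((ι₂ k A A).comp HB.snd.S) ((ι₁ k A A).comp HB.snd.S) := by
    have h : (LinearMap.mul' k (A ⊗[k] A)).comp
        (TensorProduct.map (ι₂ k A A) (ι₁ k A A))
        = (TensorProduct.comm k A A).toLinearMap := by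
      apply TensorProduct.ext'; intro x y
      simp [hb_i1_apply, hb_i2_apply, Algebra.TensorProduct.tmul_mul_tmul]
    apply LinearMap.ext; intro a
    rw [conv_apply]
    have e1 : TensorProduct.map ((ι₂ k A A).comp HB.snd.S) ((ι₁ k A A).comp HB.snd.S)
        = (TensorProduct.map (ι₂ k A A) (ι₁ k A A)).comp
            (TensorProduct.map HB.snd.S HB.snd.S) :=
      TensorProduct.map_comp _ _ _ _
    rw [e1]
    simp only [LinearMap.comp_apply]
    have h2 := LinearMap.congr_fun h
      ((TensorProduct.map HB.snd.S HB.snd.S) (HB.snd.Δ a))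
    simp only [LinearMap.comp_apply] at h2
    rw [h2]
  have u1 : conv HB.snd.Δ (HB.snd.Δ.comp HB.snd.S) HB.snd.Δ = cunit HB.snd.ε :=
    hs_conv_inv_left HB.snd (hs_isAlg_comul HB.snd)
  have u2 : conv HB.snd.Δ HB.snd.Δ
      (conv HB.snd.Δ ((ι₂ k A A).comp HB.snd.S) ((ι₁ k A A).comp HB.snd.S))
      = cunit HB.snd.ε := by
    nth_rewrite 2 [comul'_as_conv HB]
    rw [← conv_assoc (hs_coassoc HB.snd) (ι₁ k A A) (ι₂ k A A) _]
    rw [conv_assoc (hs_coassoc HB.snd) (ι₂ k A A) ((ι₂ k A A).comp HB.snd.S) _]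
    rw [hs_conv_inv_right HB.snd isAlg_i2, conv_one_left (hs_counitL HB.snd)]
    exact hs_conv_inv_right HB.snd isAlg_i1
  rw [hG]
  exact conv_unique (hs_coassoc HB.snd) (hs_counitL HB.snd) (hs_counitR HB.snd) u1 u2

/-- composing a `⋆'`-convolution with `T` reverses the factors (commutative target). -/
lemma conv_comp_T (hcomm : ∀ x y : A, x * y = y * x)
    {B : Type*} [Ring B] [Algebra k B] (hcommB : ∀ x y : B, x * y = y * x)
    (f g : A →ₗ[k] B) :
    (conv HB.snd.Δ f g).comp HB.snd.S
      = conv HB.snd.Δ (g.comp HB.snd.S) (f.comp HB.snd.S) := by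
  apply LinearMap.ext; intro a
  simp only [LinearMap.comp_apply, conv_apply]
  have h1 := LinearMap.congr_fun (anticoT HB hcomm) a
  simp only [LinearMap.comp_apply, LinearEquiv.coe_coe] at h1
  rw [h1]
  have h2 : (LinearMap.mul' k B).comp
      ((TensorProduct.map f g).comp (TensorProduct.comm k A A).toLinearMap)
      = (LinearMap.mul' k B).comp (TensorProduct.map g f) := by
    apply TensorProduct.ext'; intro x y
    simp only [LinearMap.comp_apply, LinearEquiv.coe_coe, TensorProduct.comm_tmul,
      TensorProduct.map_tmul, LinearMap.mul'_apply]
    exact hcommB _ _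
  have h3 := LinearMap.congr_fun h2
    ((TensorProduct.map HB.snd.S HB.snd.S) (HB.snd.Δ a))
  simp only [LinearMap.comp_apply, LinearEquiv.coe_coe] at h3
  rw [h3]
  congr 1
  rw [← LinearMap.comp_apply, ← TensorProduct.map_comp]

/-- `assoc` as a convolution-splitting. -/
lemma assoc_split :
    (LinearMap.mul' k (A ⊗[k] (A ⊗[k] A))).comp
      (TensorProduct.map
        (TensorProduct.map (LinearMap.id : A →ₗ[k] A) (ι₁ k A A))
        ((ι₂ k A (A ⊗[k] A)).comp (ι₂ k A A)))
      = (TensorProduct.assoc k A A A).toLinearMap := by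
  apply TensorProduct.ext_threefold; intro x y z
  simp [hb_i1_apply, hb_i2_apply, Algebra.TensorProduct.tmul_mul_tmul]

lemma id_split :
    (LinearMap.mul' k (A ⊗[k] (A ⊗[k] A))).comp
      (TensorProduct.map (ι₁ k A (A ⊗[k] A)) (ι₂ k A (A ⊗[k] A)))
      = LinearMap.id := by
  apply TensorProduct.ext'; intro x w
  simp [hb_i1_apply, hb_i2_apply, Algebra.TensorProduct.tmul_mul_tmul]

/-- `Φ ∘ Δ'` as convolution. -/
lemma PhiDelta (hcomm : ∀ x y : A, x * y = y * x) :
    ((TensorProduct.assoc k A A A).toLinearMap.comp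
        (TensorProduct.map (φmap k A HB.fst.Δ HB.snd.Δ HB.fst.S HB.snd.S)
          (LinearMap.id : A →ₗ[k] A))).comp HB.snd.Δ
      = conv HB.snd.Δ
          (((TensorProduct.map (LinearMap.id : A →ₗ[k] A) (ι₁ k A A)).comp
              (ρmap k A HB.fst.Δ HB.snd.Δ HB.fst.S)).comp HB.snd.S)
          ((TensorProduct.map (LinearMap.id : A →ₗ[k] A) HB.snd.Δ).comp HB.snd.Δ) := by
  set φ0 := φmap k A HB.fst.Δ HB.snd.Δ HB.fst.S HB.snd.S with hφ0
  set ρ0 := ρmap k A HB.fst.Δ HB.snd.Δ HB.fst.S with hρ0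
  have s2 : ((TensorProduct.assoc k A A A).toLinearMap.comp
      (TensorProduct.map φ0 (LinearMap.id : A →ₗ[k] A))).comp HB.snd.Δ
      = conv HB.snd.Δ
          ((TensorProduct.map (LinearMap.id : A →ₗ[k] A) (ι₁ k A A)).comp φ0)
          ((ι₂ k A (A ⊗[k] A)).comp (ι₂ k A A)) := by
    unfold conv
    rw [show TensorProduct.map
        ((TensorProduct.map (LinearMap.id : A →ₗ[k] A) (ι₁ k A A)).comp φ0)
        ((ι₂ k A (A ⊗[k] A)).comp (ι₂ k A A))
      = (TensorProduct.map
          (TensorProduct.map (LinearMap.id : A →ₗ[k] A) (ι₁ k A A))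
          ((ι₂ k A (A ⊗[k] A)).comp (ι₂ k A A))).comp
        (TensorProduct.map φ0 LinearMap.id) from by
      rw [← TensorProduct.map_comp, LinearMap.comp_id]]
    rw [← LinearMap.comp_assoc, ← LinearMap.comp_assoc, assoc_split]
  have s3 : conv HB.snd.Δ
      ((TensorProduct.map (LinearMap.id : A →ₗ[k] A) (ι₁ k A A)).comp HB.snd.Δ)
      ((ι₂ k A (A ⊗[k] A)).comp (ι₂ k A A))
      = (TensorProduct.map (LinearMap.id : A →ₗ[k] A) HB.snd.Δ).comp HB.snd.Δ := by
    unfold conv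
    rw [show TensorProduct.map
        ((TensorProduct.map (LinearMap.id : A →ₗ[k] A) (ι₁ k A A)).comp HB.snd.Δ)
        ((ι₂ k A (A ⊗[k] A)).comp (ι₂ k A A))
      = (TensorProduct.map
          (TensorProduct.map (LinearMap.id : A →ₗ[k] A) (ι₁ k A A))
          ((ι₂ k A (A ⊗[k] A)).comp (ι₂ k A A))).comp
        (TensorProduct.map HB.snd.Δ LinearMap.id) from by
      rw [← TensorProduct.map_comp, LinearMap.comp_id]]
    rw [← LinearMap.comp_assoc, ← LinearMap.comp_assoc, assoc_split,
      LinearMap.comp_assoc]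
    exact (hs_coassoc HB.snd).symm
  have hi12 : IsAlgebraMorphism k (A ⊗[k] A) (A ⊗[k] (A ⊗[k] A))
      (TensorProduct.map (LinearMap.id : A →ₗ[k] A) (ι₁ k A A)) :=
    isAlg_map isAlg_id isAlg_i1
  have s4 : (TensorProduct.map (LinearMap.id : A →ₗ[k] A) (ι₁ k A A)).comp φ0
      = conv HB.snd.Δ
          (((TensorProduct.map (LinearMap.id : A →ₗ[k] A) (ι₁ k A A)).comp ρ0).comp
            HB.snd.S)
          ((TensorProduct.map (LinearMap.id : A →ₗ[k] A) (ι₁ k A A)).comp HB.snd.Δ) := by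
    rw [hφ0, phi_conv HB, comp_conv hi12, ← LinearMap.comp_assoc]
  rw [s2, s4]
  rw [← conv_assoc (hs_coassoc HB.snd), s3]

/-- (P3a) : coassociativity of the right coaction `φ`. -/
lemma coassoc_phi (hcomm : ∀ x y : A, x * y = y * x) :
    (TensorProduct.map (LinearMap.id : A →ₗ[k] A) HB.snd.Δ).comp
        (φmap k A HB.fst.Δ HB.snd.Δ HB.fst.S HB.snd.S)
      = (TensorProduct.assoc k A A A).toLinearMap.comp
          ((TensorProduct.map (φmap k A HB.fst.Δ HB.snd.Δ HB.fst.S HB.snd.S)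
            (LinearMap.id : A →ₗ[k] A)).comp
            (φmap k A HB.fst.Δ HB.snd.Δ HB.fst.S HB.snd.S)) := by
  set φ0 := φmap k A HB.fst.Δ HB.snd.Δ HB.fst.S HB.snd.S with hφ0
  set ρ0 := ρmap k A HB.fst.Δ HB.snd.Δ HB.fst.S with hρ0
  have hcT3 : ∀ x y : A ⊗[k] (A ⊗[k] A), x * y = y * x :=
    tensor_comm_of_comm hcomm (tensor_comm_of_comm hcomm hcomm)
  have hD' : IsAlgebraMorphism k (A ⊗[k] A) (A ⊗[k] (A ⊗[k] A))
      (TensorProduct.map (LinearMap.id : A →ₗ[k] A) HB.snd.Δ) :=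
    isAlg_map isAlg_id (hs_isAlg_comul HB.snd)
  have hΦ : IsAlgebraMorphism k (A ⊗[k] A) (A ⊗[k] (A ⊗[k] A))
      ((TensorProduct.assoc k A A A).toLinearMap.comp
        (TensorProduct.map φ0 (LinearMap.id : A →ₗ[k] A))) :=
    isAlg_comp isAlg_assoc (isAlg_map (isAlg_phi HB hcomm) isAlg_id)
  -- LHS
  have L1 : (TensorProduct.map (LinearMap.id : A →ₗ[k] A) HB.snd.Δ).comp φ0
      = conv HB.snd.Δ
          (((TensorProduct.map (LinearMap.id : A →ₗ[k] A) HB.snd.Δ).comp ρ0).comp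
            HB.snd.S)
          ((TensorProduct.map (LinearMap.id : A →ₗ[k] A) HB.snd.Δ).comp HB.snd.Δ) := by
    rw [hφ0, phi_conv HB, comp_conv hD', ← LinearMap.comp_assoc]
  rw [L1]
  have L2 : ((TensorProduct.map (LinearMap.id : A →ₗ[k] A) HB.snd.Δ).comp ρ0).comp
      HB.snd.S
      = conv HB.snd.Δ
          ((((TensorProduct.assoc k A A A).toLinearMap.comp
              (TensorProduct.map φ0 (LinearMap.id : A →ₗ[k] A))).comp ρ0).comp
            HB.snd.S)
          (((TensorProduct.map (LinearMap.id : A →ₗ[k] A) (ι₁ k A A)).comp ρ0).comp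
            HB.snd.S) := by
    rw [core_HM2 HB hcomm]
    rw [show (((TensorProduct.assoc k A A A).toLinearMap.comp
        (TensorProduct.map φ0 (LinearMap.id : A →ₗ[k] A))).comp ρ0)
      = ((TensorProduct.assoc k A A A).toLinearMap.comp
          (TensorProduct.map φ0 (LinearMap.id : A →ₗ[k] A))).comp ρ0 from rfl]
    exact conv_comp_T HB hcomm hcT3 _ _
  rw [L2]
  rw [← conv_assoc (hs_coassoc HB.snd)]
  rw [← PhiDelta HB hcomm]
  -- now : conv Δ' ((Φ∘ρ)∘T) (Φ∘Δ') = Φ ∘ φ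
  have R1 : (((TensorProduct.assoc k A A A).toLinearMap.comp
      (TensorProduct.map φ0 (LinearMap.id : A →ₗ[k] A))).comp ρ0).comp HB.snd.S
      = ((TensorProduct.assoc k A A A).toLinearMap.comp
          (TensorProduct.map φ0 (LinearMap.id : A →ₗ[k] A))).comp
        (ρ0.comp HB.snd.S) := by
    rw [LinearMap.comp_assoc]
  have R2 : ((TensorProduct.assoc k A A A).toLinearMap.comp
      (TensorProduct.map φ0 (LinearMap.id : A →ₗ[k] A))).comp HB.snd.Δ
      = ((TensorProduct.assoc k A A A).toLinearMap.comp
          (TensorProduct.map φ0 (LinearMap.id : A →ₗ[k] A))).comp HB.snd.Δ := rfl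
  rw [R1, ← comp_conv hΦ]
  rw [show conv HB.snd.Δ (ρ0.comp HB.snd.S) HB.snd.Δ = φ0 from (phi_conv HB).symm]
  rw [LinearMap.comp_assoc]

/-- (HM3). -/
lemma HM3_map (hcomm : ∀ x y : A, x * y = y * x) :
    ((TensorProduct.assoc k A A A).toLinearMap.comp
        (TensorProduct.map HB.snd.Δ (LinearMap.id : A →ₗ[k] A))).comp
      (φmap k A HB.fst.Δ HB.snd.Δ HB.fst.S HB.snd.S)
    = conv HB.snd.Δ
        ((TensorProduct.map (LinearMap.id : A →ₗ[k] A)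
            (ρmap k A HB.fst.Δ HB.snd.Δ HB.fst.S)).comp
          (φmap k A HB.fst.Δ HB.snd.Δ HB.fst.S HB.snd.S))
        ((ι₂ k A (A ⊗[k] A)).comp
          (φmap k A HB.fst.Δ HB.snd.Δ HB.fst.S HB.snd.S)) := by
  set φ0 := φmap k A HB.fst.Δ HB.snd.Δ HB.fst.S HB.snd.S with hφ0
  set ρ0 := ρmap k A HB.fst.Δ HB.snd.Δ HB.fst.S with hρ0
  have hΘ : IsAlgebraMorphism k (A ⊗[k] A) (A ⊗[k] (A ⊗[k] A))
      ((TensorProduct.assoc k A A A).toLinearMap.comp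
        (TensorProduct.map HB.snd.Δ (LinearMap.id : A →ₗ[k] A))) :=
    isAlg_comp isAlg_assoc (isAlg_map (hs_isAlg_comul HB.snd) isAlg_id)
  have hmρ : IsAlgebraMorphism k (A ⊗[k] A) (A ⊗[k] (A ⊗[k] A))
      (TensorProduct.map (LinearMap.id : A →ₗ[k] A) ρ0) :=
    isAlg_map isAlg_id (isAlg_rho HB hcomm)
  have hι₂d : IsAlgebraMorphism k (A ⊗[k] A) (A ⊗[k] (A ⊗[k] A))
      (ι₂ k A (A ⊗[k] A)) := isAlg_i2
  -- LHS
  have L1 : ((TensorProduct.assoc k A A A).toLinearMap.comp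
      (TensorProduct.map HB.snd.Δ (LinearMap.id : A →ₗ[k] A))).comp φ0
      = conv HB.snd.Δ
          ((((TensorProduct.assoc k A A A).toLinearMap.comp
            (TensorProduct.map HB.snd.Δ LinearMap.id)).comp ρ0).comp HB.snd.S)
          (((TensorProduct.assoc k A A A).toLinearMap.comp
            (TensorProduct.map HB.snd.Δ LinearMap.id)).comp HB.snd.Δ) := by
    rw [hφ0, phi_conv HB, comp_conv hΘ, ← LinearMap.comp_assoc]
  have L2 : ((TensorProduct.assoc k A A A).toLinearMap.comp
      (TensorProduct.map HB.snd.Δ (LinearMap.id : A →ₗ[k] A))).comp ρ0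
      = (TensorProduct.map (LinearMap.id : A →ₗ[k] A) ρ0).comp ρ0 := by
    rw [LinearMap.comp_assoc]
    exact (coassoc_rho HB hcomm).symm
  have L3 : ((TensorProduct.assoc k A A A).toLinearMap.comp
      (TensorProduct.map HB.snd.Δ (LinearMap.id : A →ₗ[k] A))).comp HB.snd.Δ
      = (TensorProduct.map (LinearMap.id : A →ₗ[k] A) HB.snd.Δ).comp HB.snd.Δ := by
    rw [LinearMap.comp_assoc]
    exact (hs_coassoc HB.snd).symm
  rw [L1, L2, L3]
  -- RHS
  have R1 : (TensorProduct.map (LinearMap.id : A →ₗ[k] A) ρ0).comp φ0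
      = conv HB.snd.Δ
          (((TensorProduct.map (LinearMap.id : A →ₗ[k] A) ρ0).comp ρ0).comp HB.snd.S)
          ((TensorProduct.map (LinearMap.id : A →ₗ[k] A) ρ0).comp HB.snd.Δ) := by
    rw [hφ0, phi_conv HB, comp_conv hmρ, ← LinearMap.comp_assoc]
  have R2 : (ι₂ k A (A ⊗[k] A)).comp φ0
      = conv HB.snd.Δ ((ι₂ k A (A ⊗[k] A)).comp (ρ0.comp HB.snd.S))
          ((ι₂ k A (A ⊗[k] A)).comp HB.snd.Δ) := by
    rw [hφ0, phi_conv HB, comp_conv hι₂d]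
  have h3 : (TensorProduct.map (LinearMap.id : A →ₗ[k] A) ρ0).comp HB.snd.Δ
      = conv HB.snd.Δ (ι₁ k A (A ⊗[k] A)) ((ι₂ k A (A ⊗[k] A)).comp ρ0) := by
    unfold conv
    rw [show TensorProduct.map (ι₁ k A (A ⊗[k] A)) ((ι₂ k A (A ⊗[k] A)).comp ρ0)
        = (TensorProduct.map (ι₁ k A (A ⊗[k] A)) (ι₂ k A (A ⊗[k] A))).comp
          (TensorProduct.map LinearMap.id ρ0) from by
      rw [← TensorProduct.map_comp, LinearMap.comp_id]]
    rw [← LinearMap.comp_assoc, ← LinearMap.comp_assoc, id_split, LinearMap.id_comp]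
  have s7 : conv HB.snd.Δ (ι₁ k A (A ⊗[k] A))
      ((ι₂ k A (A ⊗[k] A)).comp HB.snd.Δ)
      = (TensorProduct.map (LinearMap.id : A →ₗ[k] A) HB.snd.Δ).comp HB.snd.Δ := by
    unfold conv
    rw [show TensorProduct.map (ι₁ k A (A ⊗[k] A)) ((ι₂ k A (A ⊗[k] A)).comp HB.snd.Δ)
        = (TensorProduct.map (ι₁ k A (A ⊗[k] A)) (ι₂ k A (A ⊗[k] A))).comp
          (TensorProduct.map LinearMap.id HB.snd.Δ) from by
      rw [← TensorProduct.map_comp, LinearMap.comp_id]]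
    rw [← LinearMap.comp_assoc, ← LinearMap.comp_assoc, id_split, LinearMap.id_comp]
  rw [R1, R2, h3]
  set X1 := ((TensorProduct.map (LinearMap.id : A →ₗ[k] A) ρ0).comp ρ0).comp HB.snd.S
    with hX1
  set W := conv HB.snd.Δ (ι₁ k A (A ⊗[k] A)) ((ι₂ k A (A ⊗[k] A)).comp ρ0) with hW
  set Y1 := (ι₂ k A (A ⊗[k] A)).comp (ρ0.comp HB.snd.S) with hY1
  set Y2 := (ι₂ k A (A ⊗[k] A)).comp HB.snd.Δ with hY2
  set Z := conv HB.snd.Δ Y1 Y2 with hZ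
  rw [← conv_assoc (hs_coassoc HB.snd) X1 W Z]
  rw [hW, ← conv_assoc (hs_coassoc HB.snd) (ι₁ k A (A ⊗[k] A))
    ((ι₂ k A (A ⊗[k] A)).comp ρ0) Z]
  rw [hZ, conv_assoc (hs_coassoc HB.snd) ((ι₂ k A (A ⊗[k] A)).comp ρ0) Y1 Y2]
  have h8 : conv HB.snd.Δ ((ι₂ k A (A ⊗[k] A)).comp ρ0) Y1 = cunit HB.snd.ε := by
    rw [hY1, ← comp_conv hι₂d, hρ0, rho_rhoT_right HB hcomm]
    exact comp_cunit hι₂d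
  rw [h8, conv_one_left (hs_counitL HB.snd), hY2, s7]

end P3aHM3


/-- Proposition 3.3.  Let `(A, Δ, Δ')` be a commutative Hopf
brace with antipodes `S` (for `Δ`) and `T` (for `Δ'`), and define
`ρ(a) = S(a_1) a_{21'} ⊗ a_{22'}` and
`φ(a) = (T(a_{1'}))_{(-1)} a_{2'} ⊗ (T(a_{1'}))_{(0)} a_{3'}`.  Then
`(A_{Δ'}, A_{Δ'}, ρ, φ)` is a Hopf matched pair: `ρ` makes `A` a left
`(A, Δ')`-comodule algebra, `φ` makes `A` a right `(A, Δ')`-comodule algebra,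
and (HM1)–(HM4) hold (with `Δ'` as comultiplication on both factors). -/
theorem proposition_3_3 {k : Type*} [Field k] {A : Type*} [Ring A] [Algebra k A]
    (HB : HopfBrace k A) (hcomm : ∀ x y : A, x * y = y * x) :
    IsHopfMatchedPair k A A HB.snd.Δ HB.snd.ε HB.snd.Δ HB.snd.ε
      (ρmap k A HB.fst.Δ HB.snd.Δ HB.fst.S)
      (φmap k A HB.fst.Δ HB.snd.Δ HB.fst.S HB.snd.S) := by
  refine ⟨⟨?_, ?_⟩, isAlg_rho HB hcomm, ⟨?_, ?_⟩, isAlg_phi HB hcomm, ?_, ?_, ?_, ?_, ?_⟩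
  · -- left coaction, coassociativity
    intro a
    have h := LinearMap.congr_fun (coassoc_rho HB hcomm) a
    simp only [LinearMap.comp_apply, LinearEquiv.coe_coe] at h
    exact h
  · -- left coaction, counit
    intro a
    have h := LinearMap.congr_fun (rho_counitL HB) a
    simp only [ELc, LinearMap.comp_apply, LinearEquiv.coe_coe, LinearMap.id_apply] at h
    exact h
  · -- right coaction, coassociativity
    intro a
    have h := LinearMap.congr_fun (coassoc_phi HB hcomm) a
    simp only [LinearMap.comp_apply, LinearEquiv.coe_coe] at h
    exact h
  · -- right coaction, counit
    intro a
    have h := LinearMap.congr_fun (phi_counitR HB hcomm) a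
    simp only [ERc, LinearMap.comp_apply, LinearEquiv.coe_coe, LinearMap.id_apply] at h
    exact h
  · -- HM1, first half
    intro a
    have h := LinearMap.congr_fun (rho_counitR HB hcomm) a
    simp only [ERc, LinearMap.comp_apply, LinearEquiv.coe_coe, cunit_apply] at h
    exact h
  · -- HM1, second half
    intro a
    have h := LinearMap.congr_fun (phi_counitL HB) a
    simp only [ELc, LinearMap.comp_apply, LinearEquiv.coe_coe, cunit_apply] at h
    exact h
  · -- HM2
    intro a
    have hrhs : HM2RHS k A A HB.snd.Δ (ρmap k A HB.fst.Δ HB.snd.Δ HB.fst.S)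
        (φmap k A HB.fst.Δ HB.snd.Δ HB.fst.S HB.snd.S)
        = conv HB.snd.Δ
            ((TensorProduct.map (LinearMap.id : A →ₗ[k] A) (ι₁ k A A)).comp
              (ρmap k A HB.fst.Δ HB.snd.Δ HB.fst.S))
            (((TensorProduct.assoc k A A A).toLinearMap.comp
              (TensorProduct.map (φmap k A HB.fst.Δ HB.snd.Δ HB.fst.S HB.snd.S)
                (LinearMap.id : A →ₗ[k] A))).comp
              (ρmap k A HB.fst.Δ HB.snd.Δ HB.fst.S)) := by
      unfold HM2RHS conv
      rw [LinearMap.comp_assoc]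
    rw [hrhs]
    have h := LinearMap.congr_fun (core_HM2 HB hcomm) a
    simp only [LinearMap.comp_apply] at h
    exact h
  · -- HM3
    intro a
    have hrhs : HM3RHS k A A HB.snd.Δ (ρmap k A HB.fst.Δ HB.snd.Δ HB.fst.S)
        (φmap k A HB.fst.Δ HB.snd.Δ HB.fst.S HB.snd.S)
        = conv HB.snd.Δ
            ((TensorProduct.map (LinearMap.id : A →ₗ[k] A)
                (ρmap k A HB.fst.Δ HB.snd.Δ HB.fst.S)).comp
              (φmap k A HB.fst.Δ HB.snd.Δ HB.fst.S HB.snd.S))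
            ((ι₂ k A (A ⊗[k] A)).comp
              (φmap k A HB.fst.Δ HB.snd.Δ HB.fst.S HB.snd.S)) := rfl
    rw [hrhs]
    have h := LinearMap.congr_fun (HM3_map HB hcomm) a
    simp only [LinearMap.comp_apply, LinearEquiv.coe_coe] at h
    exact h
  · -- HM4
    intro a h
    exact tensor_comm_of_comm hcomm hcomm _ _


end HopfPaper
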